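/- arXiv:1803.06394 — 5 statements merged into one kernel-verified Lean document; each statement's English description precedes it below -/
import Mathlib

section
/- For every positive integer n, the number of partitions of n whose set of even parts has exactly one element equals the difference between the total number of parts in all partitions of n into odd parts and the total number of parts in all partitions of n into distinct parts. -/
section EulerCopy
/-!
# Euler's Partition Theorem

This file proves Theorem 45 from the [100 Theorems List](https://www.cs.ru.nl/~freek/100/).

The theorem concerns the counting of integer partitions -- ways of
writing a positive integer `n` as a sum of positive integer parts.

Specifically, Euler proved that the number of integer partitions of `n`
into *distinct* parts equals the number of partitions of `n` into *odd*
parts.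

## Proof outline

The proof is based on the generating functions for odd and distinct partitions, which turn out to be
equal:

$$\prod_{i=0}^\infty \frac {1}{1-X^{2i+1}} = \prod_{i=0}^\infty (1+X^{i+1})$$

In fact, we do not take a limit: it turns out that comparing the `n`'th coefficients of the partial
products up to `m := n + 1` is sufficient.

In particular, we

1. define the partial product for the generating function for odd partitions `partialOddGF m` :=
  $$\prod_{i=0}^m \frac {1}{1-X^{2i+1}}$$;
2. prove `oddGF_prop`: if `m` is big enough (`m * 2 > n`), the partial product's coefficient counts
  the number of odd partitions;
3. define the partial product for the generating function for distinct partitions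
  `partialDistinctGF m` := $$\prod_{i=0}^m (1+X^{i+1})$$;
4. prove `distinctGF_prop`: if `m` is big enough (`m + 1 > n`), the `n`th coefficient of the
  partial product counts the number of distinct partitions of `n`;
5. prove `same_coeffs`: if m is big enough (`m ≥ n`), the `n`th coefficient of the partial products
  are equal;
6. combine the above in `partition_theorem`.

## References
https://en.wikipedia.org/wiki/Partition_(number_theory)#Odd_parts_and_distinct_parts
-/


open PowerSeries

namespace Theorems100

noncomputable section

variable {α : Type*}

open Finset

open scoped Classical

/-- The partial product for the generating function for odd partitions.
TODO: As `m` tends to infinity, this converges (in the `X`-adic topology).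

If `m` is sufficiently large, the `i`th coefficient gives the number of odd partitions of the
natural number `i`: proved in `oddGF_prop`.
It is stated for an arbitrary field `α`, though it usually suffices to use `ℚ` or `ℝ`.
-/
def partialOddGF (m : ℕ) [Field α] :=
  ∏ i ∈ range m, (1 - (X : PowerSeries α) ^ (2 * i + 1))⁻¹

/-- The partial product for the generating function for distinct partitions.
TODO: As `m` tends to infinity, this converges (in the `X`-adic topology).

If `m` is sufficiently large, the `i`th coefficient gives the number of distinct partitions of the
natural number `i`: proved in `distinctGF_prop`.
It is stated for an arbitrary commutative semiring `α`, though it usually suffices to use `ℕ`, `ℚ`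
or `ℝ`.
-/
def partialDistinctGF (m : ℕ) [CommSemiring α] :=
  ∏ i ∈ range m, (1 + (X : PowerSeries α) ^ (i + 1))

open Finset.HasAntidiagonal

universe u
variable {ι : Type u}

/-- A convenience constructor for the power series whose coefficients indicate a subset. -/
def indicatorSeries (α : Type*) [Semiring α] (s : Set ℕ) : PowerSeries α :=
  PowerSeries.mk fun n => if n ∈ s then 1 else 0

theorem coeff_indicator (s : Set ℕ) [Semiring α] (n : ℕ) :
    coeff (R := α) n (indicatorSeries _ s) = if n ∈ s then 1 else 0 :=
  coeff_mk _ _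

theorem coeff_indicator_pos (s : Set ℕ) [Semiring α] (n : ℕ) (h : n ∈ s) :
    coeff (R := α) n (indicatorSeries _ s) = 1 := by rw [coeff_indicator, if_pos h]

theorem coeff_indicator_neg (s : Set ℕ) [Semiring α] (n : ℕ) (h : n ∉ s) :
    coeff (R := α) n (indicatorSeries _ s) = 0 := by rw [coeff_indicator, if_neg h]

theorem constantCoeff_indicator (s : Set ℕ) [Semiring α] :
    constantCoeff (R := α) (indicatorSeries _ s) = if 0 ∈ s then 1 else 0 :=
  rfl

theorem two_series (i : ℕ) [Semiring α] :
    1 + (X : PowerSeries α) ^ i.succ = indicatorSeries α {0, i.succ} := by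
  ext n
  simp only [coeff_indicator, coeff_one, coeff_X_pow, Set.mem_insert_iff, Set.mem_singleton_iff,
    map_add]
  cases' n with d
  · simp [(Nat.succ_ne_zero i).symm]
  · simp [Nat.succ_ne_zero d]

theorem num_series' [Field α] (i : ℕ) :
    (1 - (X : PowerSeries α) ^ (i + 1))⁻¹ = indicatorSeries α {k | i + 1 ∣ k} := by
  rw [PowerSeries.inv_eq_iff_mul_eq_one]
  · ext n
    cases n with
    | zero => simp [mul_sub, zero_pow, constantCoeff_indicator]
    | succ n =>
      simp only [coeff_one, if_false, mul_sub, mul_one, coeff_indicator,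
        LinearMap.map_sub, reduceCtorEq]
      simp_rw [coeff_mul, coeff_X_pow, coeff_indicator, @boole_mul _ _ _ _]
      erw [@sum_ite _ _ _ _ _ (fun _ => Classical.propDecidable _), sum_ite]
      simp_rw [@filter_filter _ _ _ _ _, sum_const_zero, add_zero, sum_const, nsmul_eq_mul, mul_one,
        sub_eq_iff_eq_add, zero_add]
      symm
      split_ifs with h
      · suffices #{a ∈ antidiagonal (n + 1) | i + 1 ∣ a.fst ∧ a.snd = i + 1} = 1 by
          simp only [Set.mem_setOf_eq]; convert congr_arg ((↑) : ℕ → α) this; norm_cast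
        rw [card_eq_one]
        cases' h with p hp
        refine ⟨((i + 1) * (p - 1), i + 1), ?_⟩
        ext ⟨a₁, a₂⟩
        simp only [mem_filter, Prod.mk_inj, HasAntidiagonal.mem_antidiagonal, mem_singleton]
        constructor
        · rintro ⟨a_left, ⟨a, rfl⟩, rfl⟩
          refine ⟨?_, rfl⟩
          rw [Nat.mul_sub_left_distrib, ← hp, ← a_left, mul_one, Nat.add_sub_cancel]
        · rintro ⟨rfl, rfl⟩
          match p with
          | 0 => rw [mul_zero] at hp; cases hp
          | p + 1 => rw [hp]; simp [mul_add]
      · suffices #{a ∈ antidiagonal (n + 1) | i + 1 ∣ a.fst ∧ a.snd = i + 1} = 0 by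
          simp only [Set.mem_setOf_eq]; convert congr_arg ((↑) : ℕ → α) this; norm_cast
        rw [card_eq_zero]
        apply eq_empty_of_forall_notMem
        simp only [Prod.forall, mem_filter, not_and, HasAntidiagonal.mem_antidiagonal]
        rintro _ h₁ h₂ ⟨a, rfl⟩ rfl
        apply h
        simp [← h₂]
  · simp [zero_pow]

def mkOdd : ℕ ↪ ℕ :=
  ⟨fun i => 2 * i + 1, fun x y h => by linarith⟩

-- The main workhorse of the partition theorem proof.
theorem partialGF_prop (α : Type*) [CommSemiring α] (n : ℕ) (s : Finset ℕ) (hs : ∀ i ∈ s, 0 < i)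
    (c : ℕ → Set ℕ) (hc : ∀ i, i ∉ s → 0 ∈ c i) :
    #{p : n.Partition | (∀ j, p.parts.count j ∈ c j) ∧ ∀ j ∈ p.parts, j ∈ s} =
      coeff (R := α) n (∏ i ∈ s, indicatorSeries α ((· * i) '' c i)) := by
  simp_rw [coeff_prod, coeff_indicator, prod_boole, sum_boole]
  apply congr_arg
  simp only [mem_univ, forall_true_left, not_and, not_forall, exists_prop,
    Set.mem_image, not_exists]
  set φ : (a : Nat.Partition n) →
    a ∈ filter (fun p ↦ (∀ (j : ℕ), Multiset.count j p.parts ∈ c j) ∧ ∀ j ∈ p.parts, j ∈ s) univ →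
    ℕ →₀ ℕ := fun p _ => {
      toFun := fun i => Multiset.count i p.parts • i
      support := Finset.filter (fun i => i ≠ 0) p.parts.toFinset
      mem_support_toFun := fun a => by
        simp only [smul_eq_mul, ne_eq, mul_eq_zero, Multiset.count_eq_zero]
        rw [not_or, not_not]
        simp only [Multiset.mem_toFinset, not_not, mem_filter] }
  refine Finset.card_bij φ ?_ ?_ ?_
  · intro a ha
    simp only [φ, not_forall, not_exists, not_and, exists_prop, mem_filter]
    rw [mem_finsuppAntidiag]
    dsimp only [ne_eq, smul_eq_mul, id_eq, eq_mpr_eq_cast, le_eq_subset, Finsupp.coe_mk]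
    simp only [mem_univ, forall_true_left, not_and, not_forall, exists_prop,
      mem_filter, true_and] at ha
    refine ⟨⟨?_, fun i ↦ ?_⟩, fun i _ ↦ ⟨a.parts.count i, ha.1 i, rfl⟩⟩
    · conv_rhs => simp [← a.parts_sum]
      rw [sum_multiset_count_of_subset _ s]
      · simp only [smul_eq_mul]
      · intro i
        simp only [Multiset.mem_toFinset, not_not, mem_filter]
        apply ha.2
    · simp only [ne_eq, Multiset.mem_toFinset, not_not, mem_filter, and_imp]
      exact fun hi _ ↦ ha.2 i hi
  · intro p₁ hp₁ p₂ hp₂ h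
    apply Nat.Partition.ext
    simp only [true_and, mem_univ, mem_filter] at hp₁ hp₂
    ext i
    simp only [φ, ne_eq, Multiset.mem_toFinset, not_not, smul_eq_mul, Finsupp.mk.injEq] at h
    by_cases hi : i = 0
    · rw [hi]
      rw [Multiset.count_eq_zero_of_notMem]
      · rw [Multiset.count_eq_zero_of_notMem]
        intro a; exact Nat.lt_irrefl 0 (hs 0 (hp₂.2 0 a))
      intro a; exact Nat.lt_irrefl 0 (hs 0 (hp₁.2 0 a))
    · rw [← mul_left_inj' hi]
      rw [funext_iff] at h
      exact h.2 i
  · simp only [φ, mem_filter, mem_finsuppAntidiag, mem_univ, exists_prop, true_and, and_assoc]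
    rintro f ⟨hf, hf₃, hf₄⟩
    have hf' : f ∈ finsuppAntidiag s n := mem_finsuppAntidiag.mpr ⟨hf, hf₃⟩
    simp only [mem_finsuppAntidiag] at hf'
    refine ⟨⟨∑ i ∈ s, Multiset.replicate (f i / i) i, ?_, ?_⟩, ?_, ?_, ?_⟩
    · intro i hi
      simp only [exists_prop, Multiset.mem_sum, mem_map, Function.Embedding.coeFn_mk] at hi
      rcases hi with ⟨t, ht, z⟩
      apply hs
      rwa [Multiset.eq_of_mem_replicate z]
    · simp_rw [Multiset.sum_sum, Multiset.sum_replicate, Nat.nsmul_eq_mul]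
      rw [← hf'.1]
      refine sum_congr rfl fun i hi => Nat.div_mul_cancel ?_
      rcases hf₄ i hi with ⟨w, _, hw₂⟩
      rw [← hw₂]
      exact dvd_mul_left _ _
    · intro i
      simp_rw [Multiset.count_sum', Multiset.count_replicate, sum_ite_eq']
      split_ifs with h
      · rcases hf₄ i h with ⟨w, hw₁, hw₂⟩
        rwa [← hw₂, Nat.mul_div_cancel _ (hs i h)]
      · exact hc _ h
    · intro i hi
      rw [Multiset.mem_sum] at hi
      rcases hi with ⟨j, hj₁, hj₂⟩
      rwa [Multiset.eq_of_mem_replicate hj₂]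
    · ext i
      simp_rw [Multiset.count_sum', Multiset.count_replicate, sum_ite_eq']
      simp only [ne_eq, Multiset.mem_toFinset, not_not, smul_eq_mul, ite_mul,
        zero_mul, Finsupp.coe_mk]
      split_ifs with h
      · apply Nat.div_mul_cancel
        rcases hf₄ i h with ⟨w, _, hw₂⟩
        apply Dvd.intro_left _ hw₂
      · apply symm
        rw [← Finsupp.notMem_support_iff]
        exact notMem_mono hf'.2 h

theorem partialOddGF_prop [Field α] (n m : ℕ) :
    #{p : n.Partition | ∀ j ∈ p.parts, j ∈ (range m).map mkOdd} = coeff (R := α) n (partialOddGF m) := by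
  rw [partialOddGF]
  convert partialGF_prop α n
    ((range m).map mkOdd) _ (fun _ => Set.univ) (fun _ _ => trivial) using 2
  · congr
    simp only [true_and, forall_const, Set.mem_univ]
  · rw [Finset.prod_map]
    simp_rw [num_series']
    congr! 2 with x
    ext k
    constructor
    · rintro ⟨p, rfl⟩
      refine ⟨p, ⟨⟩, ?_⟩
      apply mul_comm
    rintro ⟨a_w, -, rfl⟩
    apply Dvd.intro_left a_w rfl
  · intro i
    rw [mem_map]
    rintro ⟨a, -, rfl⟩
    exact Nat.succ_pos _

/-- If m is big enough, the partial product's coefficient counts the number of odd partitions -/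
theorem oddGF_prop [Field α] (n m : ℕ) (h : n < m * 2) :
    #(Nat.Partition.odds n) = coeff (R := α) n (partialOddGF m) := by
  rw [← partialOddGF_prop, Nat.Partition.odds, Nat.Partition.restricted]
  congr 2 with p
  simp only [Finset.mem_filter, Finset.mem_univ, true_and]
  apply forall₂_congr
  intro i hi
  have hin : i ≤ n := by
    simpa [p.parts_sum] using Multiset.single_le_sum (fun _ _ => Nat.zero_le _) _ hi
  simp only [mkOdd, exists_prop, mem_range, Function.Embedding.coeFn_mk, mem_map]
  constructor
  · intro hi₂
    have := Nat.mod_add_div i 2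
    rw [Nat.not_even_iff] at hi₂
    rw [hi₂, add_comm] at this
    refine ⟨i / 2, ?_, this⟩
    rw [Nat.div_lt_iff_lt_mul zero_lt_two]
    exact lt_of_le_of_lt hin h
  · rintro ⟨a, -, rfl⟩
    rw [even_iff_two_dvd]
    apply Nat.two_not_dvd_two_mul_add_one

theorem partialDistinctGF_prop [CommSemiring α] (n m : ℕ) :
    #{p : n.Partition |
        p.parts.Nodup ∧ ∀ j ∈ p.parts, j ∈ (range m).map ⟨Nat.succ, Nat.succ_injective⟩} =
      coeff (R := α) n (partialDistinctGF m) := by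
  rw [partialDistinctGF]
  convert partialGF_prop α n
    ((range m).map ⟨Nat.succ, Nat.succ_injective⟩) _ (fun _ => {0, 1}) (fun _ _ => Or.inl rfl)
    using 2
  · congr! with p
    rw [Multiset.nodup_iff_count_le_one]
    congr! 1 with i
    rcases Multiset.count i p.parts with (_ | _ | ms) <;> simp
  · simp_rw [Finset.prod_map, two_series]
    congr with i
    simp [Set.image_pair]
  · simp only [mem_map, Function.Embedding.coeFn_mk]
    rintro i ⟨_, _, rfl⟩
    apply Nat.succ_pos

/-- If m is big enough, the partial product's coefficient counts the number of distinct partitions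
-/
theorem distinctGF_prop [CommSemiring α] (n m : ℕ) (h : n < m + 1) :
    #(Nat.Partition.distincts n) = coeff (R := α) n (partialDistinctGF m) := by
  rw [← partialDistinctGF_prop, Nat.Partition.distincts]
  congr with p
  apply (and_iff_left _).symm
  intro i hi
  have : i ≤ n := by
    simpa [p.parts_sum] using Multiset.single_le_sum (fun _ _ => Nat.zero_le _) _ hi
  simp only [mkOdd, exists_prop, mem_range, Function.Embedding.coeFn_mk, mem_map]
  refine ⟨i - 1, ?_, Nat.succ_pred_eq_of_pos (p.parts_pos hi)⟩
  rw [tsub_lt_iff_right (Nat.one_le_iff_ne_zero.mpr (p.parts_pos hi).ne')]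
  exact lt_of_le_of_lt this h

/-- The key proof idea for the partition theorem, showing that the generating functions for both
sequences are ultimately the same (since the factor converges to 0 as m tends to infinity).
It's enough to not take the limit though, and just consider large enough `m`.
-/
theorem same_gf [Field α] (m : ℕ) :
    (partialOddGF m * (range m).prod fun i => 1 - (X : PowerSeries α) ^ (m + i + 1)) =
      partialDistinctGF m := by
  rw [partialOddGF, partialDistinctGF]
  induction' m with m ih
  · simp
  set! π₀ : PowerSeries α := ∏ i ∈ range m, (1 - X ^ (m + 1 + i + 1)) with hπ₀
  set! π₁ : PowerSeries α := ∏ i ∈ range m, (1 - X ^ (2 * i + 1))⁻¹ with hπ₁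
  set! π₂ : PowerSeries α := ∏ i ∈ range m, (1 - X ^ (m + i + 1)) with hπ₂
  set! π₃ : PowerSeries α := ∏ i ∈ range m, (1 + X ^ (i + 1)) with hπ₃
  rw [← hπ₃] at ih
  have h : constantCoeff (R := α) (1 - X ^ (2 * m + 1)) ≠ 0 := by
    rw [RingHom.map_sub, RingHom.map_pow, constantCoeff_one, constantCoeff_X,
      zero_pow (2 * m).succ_ne_zero, sub_zero]
    exact one_ne_zero
  calc
    (∏ i ∈ range (m + 1), (1 - X ^ (2 * i + 1))⁻¹) *
          ∏ i ∈ range (m + 1), (1 - X ^ (m + 1 + i + 1)) =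
        π₁ * (1 - X ^ (2 * m + 1))⁻¹ * (π₀ * (1 - X ^ (m + 1 + m + 1))) := by
      rw [prod_range_succ _ m, ← hπ₁, prod_range_succ _ m, ← hπ₀]
    _ = π₁ * (1 - X ^ (2 * m + 1))⁻¹ * (π₀ * ((1 + X ^ (m + 1)) * (1 - X ^ (m + 1)))) := by
      rw [← sq_sub_sq, one_pow, add_assoc _ m 1, ← two_mul (m + 1), pow_mul']
    _ = π₀ * (1 - X ^ (m + 1)) * (1 - X ^ (2 * m + 1))⁻¹ * (π₁ * (1 + X ^ (m + 1))) := by ring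
    _ =
        (∏ i ∈ range (m + 1), (1 - X ^ (m + 1 + i))) * (1 - X ^ (2 * m + 1))⁻¹ *
          (π₁ * (1 + X ^ (m + 1))) := by
      rw [prod_range_succ', add_zero, hπ₀]; simp_rw [← add_assoc]
    _ = π₂ * (1 - X ^ (m + 1 + m)) * (1 - X ^ (2 * m + 1))⁻¹ * (π₁ * (1 + X ^ (m + 1))) := by
      rw [add_right_comm, hπ₂, ← prod_range_succ]; simp_rw [add_right_comm]
    _ = π₂ * (1 - X ^ (2 * m + 1)) * (1 - X ^ (2 * m + 1))⁻¹ * (π₁ * (1 + X ^ (m + 1))) := by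
      rw [two_mul, add_right_comm _ m 1]
    _ = (1 - X ^ (2 * m + 1)) * (1 - X ^ (2 * m + 1))⁻¹ * π₂ * (π₁ * (1 + X ^ (m + 1))) := by ring
    _ = π₂ * (π₁ * (1 + X ^ (m + 1))) := by rw [PowerSeries.mul_inv_cancel _ h, one_mul]
    _ = π₁ * π₂ * (1 + X ^ (m + 1)) := by ring
    _ = π₃ * (1 + X ^ (m + 1)) := by rw [ih]
    _ = _ := by rw [prod_range_succ]

theorem same_coeffs [Field α] (m n : ℕ) (h : n ≤ m) :
    coeff (R := α) n (partialOddGF m) = coeff (R := α) n (partialDistinctGF m) := by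
  rw [← same_gf, coeff_mul_prod_one_sub_of_lt_order]
  rintro i -
  rw [order_X_pow]
  exact mod_cast Nat.lt_succ_of_le (le_add_right h)

theorem partition_theorem (n : ℕ) : #(Nat.Partition.odds n) = #(Nat.Partition.distincts n) := by
  suffices (#(Nat.Partition.odds n) : ℚ) = #(Nat.Partition.distincts n) from
    mod_cast this
  rw [distinctGF_prop n (n + 1) (by linarith)]
  rw [oddGF_prop n (n + 1) (by linarith)]
  apply same_coeffs (n + 1) n n.le_succ

end

end Theorems100

end EulerCopy


namespace AndrewsAux

open Finset

def pO (n : ℕ) : ℕ := (Nat.Partition.odds n).card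
def pD (n : ℕ) : ℕ := (Nat.Partition.distincts n).card

def subp {n k : ℕ} (P : n.Partition) (r : Multiset ℕ) (h : r ≤ P.parts) (hk : k + r.sum = n) :
    k.Partition where
  parts := P.parts - r
  parts_pos := fun hi => P.parts_pos (Multiset.mem_of_le (tsub_le_self) hi)
  parts_sum := by
    have h2 : (P.parts - r).sum + r.sum = P.parts.sum := by
      rw [← Multiset.sum_add, tsub_add_cancel_of_le h]
    have h3 := P.parts_sum
    omega

def addp {k n : ℕ} (Q : k.Partition) (r : Multiset ℕ) (hr : ∀ i ∈ r, 0 < i) (hk : k + r.sum = n) :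
    n.Partition where
  parts := Q.parts + r
  parts_pos := fun hi => by
    rcases Multiset.mem_add.mp hi with h | h
    · exact Q.parts_pos h
    · exact hr _ h
  parts_sum := by rw [Multiset.sum_add, Q.parts_sum, hk]

@[simp] lemma subp_parts {n k : ℕ} (P : n.Partition) (r : Multiset ℕ) (h : r ≤ P.parts)
    (hk : k + r.sum = n) : (subp P r h hk).parts = P.parts - r := rfl

@[simp] lemma addp_parts {k n : ℕ} (Q : k.Partition) (r : Multiset ℕ) (hr : ∀ i ∈ r, 0 < i)
    (hk : k + r.sum = n) : (addp Q r hr hk).parts = Q.parts + r := rfl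

lemma mem_odds {n : ℕ} {P : n.Partition} :
    P ∈ Nat.Partition.odds n ↔ ∀ i ∈ P.parts, ¬ Even i := by
  simp [Nat.Partition.odds, Nat.Partition.restricted]

lemma mem_distincts {n : ℕ} {P : n.Partition} :
    P ∈ Nat.Partition.distincts n ↔ P.parts.Nodup := by
  simp [Nat.Partition.distincts]

lemma part_le {n : ℕ} (P : n.Partition) {i : ℕ} (h : i ∈ P.parts) : i ≤ n :=
  P.parts_sum ▸ Multiset.le_sum_of_mem h

lemma card_parts_le {n : ℕ} (P : n.Partition) : Multiset.card P.parts ≤ n := by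
  have := Multiset.sum_map_le_sum_map (s := P.parts) (fun _ => 1) id
    (fun i hi => P.parts_pos hi)
  simpa [P.parts_sum] using this

lemma replicate_sum (c j : ℕ) : (Multiset.replicate c j).sum = j * c := by
  rw [Multiset.sum_replicate, smul_eq_mul, mul_comm]

lemma count_mul_le {n : ℕ} (P : n.Partition) (j : ℕ) : j * P.parts.count j ≤ n := by
  have h : Multiset.replicate (P.parts.count j) j ≤ P.parts :=
    Multiset.le_count_iff_replicate_le.mp le_rfl
  have := Multiset.sum_map_le_sum_map (s := Multiset.replicate (P.parts.count j) j) id id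
    (fun _ _ => le_rfl)
  have h2 : (P.parts - Multiset.replicate (P.parts.count j) j).sum
      + (Multiset.replicate (P.parts.count j) j).sum = P.parts.sum := by
    rw [← Multiset.sum_add, tsub_add_cancel_of_le h]
  rw [replicate_sum, P.parts_sum] at h2
  omega

lemma card_filter_count_odds (n j c : ℕ) (hj : ¬ Even j) (hc : 0 < c) :
    ((Nat.Partition.odds n).filter (fun P => c ≤ P.parts.count j)).card
      = if j * c ≤ n then pO (n - j * c) else 0 := by
  have hj0 : 0 < j := Nat.pos_of_ne_zero (fun h => hj (h ▸ Even.zero))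
  split_ifs with hle
  · rw [pO]
    have hk : n - j * c + (Multiset.replicate c j).sum = n := by rw [replicate_sum]; omega
    refine Finset.card_bij'
      (fun P hP => subp P (Multiset.replicate c j)
        (Multiset.le_count_iff_replicate_le.mp (Finset.mem_filter.mp hP).2)
        hk)
      (fun Q _ => addp Q (Multiset.replicate c j)
        (fun i hi => by rw [Multiset.eq_of_mem_replicate hi]; exact hj0)
        hk)
      ?_ ?_ ?_ ?_
    · intro P hP
      rw [mem_odds]
      intro i hi
      exact (mem_odds.mp (Finset.mem_filter.mp hP).1) i
        (Multiset.mem_of_le tsub_le_self hi)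
    · intro Q hQ
      rw [Finset.mem_filter]
      constructor
      · rw [mem_odds]
        intro i hi
        rcases Multiset.mem_add.mp hi with h | h
        · exact mem_odds.mp hQ i h
        · rw [Multiset.eq_of_mem_replicate h]; exact hj
      · simp [Multiset.count_replicate]
    · intro P hP
      ext1
      simp only [addp_parts, subp_parts]
      exact tsub_add_cancel_of_le
        (Multiset.le_count_iff_replicate_le.mp (Finset.mem_filter.mp hP).2)
    · intro Q hQ
      ext1
      simp
  · rw [Finset.card_eq_zero, Finset.eq_empty_iff_forall_notMem]
    intro P hP
    have h2 := (Finset.mem_filter.mp hP).2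
    have h3 := count_mul_le P j
    have : j * c ≤ j * P.parts.count j := Nat.mul_le_mul_left j h2
    omega

end AndrewsAux

-- appended to part1 content for testing
section
namespace AndrewsAux
open Finset

lemma card_Ajm (n j c : ℕ) (hj : Even j) (hj0 : 0 < j) (hc : 0 < c) :
    (Finset.univ.filter (fun P : n.Partition =>
        P.parts.toFinset.filter (fun p => Even p) = {j} ∧ P.parts.count j = c)).card
      = if j * c ≤ n then pO (n - j * c) else 0 := by
  split_ifs with hle
  · rw [pO]
    have hk : n - j * c + (Multiset.replicate c j).sum = n := by rw [replicate_sum]; omega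
    refine Finset.card_bij'
      (fun P hP => subp P (Multiset.replicate c j)
        (Multiset.le_count_iff_replicate_le.mp
          ((Finset.mem_filter.mp hP).2.2.ge))
        hk)
      (fun Q _ => addp Q (Multiset.replicate c j)
        (fun i hi => by rw [Multiset.eq_of_mem_replicate hi]; exact hj0)
        hk)
      ?_ ?_ ?_ ?_
    · intro P hP
      obtain ⟨-, hset, hcount⟩ := Finset.mem_filter.mp hP
      rw [mem_odds]
      intro i hi hieven
      simp only [subp_parts] at hi
      have himem : i ∈ P.parts := Multiset.mem_of_le tsub_le_self hi
      have hij : i ∈ P.parts.toFinset.filter (fun p => Even p) := by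
        simp [Multiset.mem_toFinset, himem, hieven]
      rw [hset, Finset.mem_singleton] at hij
      have hz : (P.parts - Multiset.replicate c j).count i = 0 := by
        rw [Multiset.count_sub, Multiset.count_replicate, if_pos hij.symm, hij, hcount]
        omega
      rw [← Multiset.count_pos, hz] at hi
      omega
    · intro Q hQ
      rw [Finset.mem_filter]
      refine ⟨Finset.mem_univ _, ?_, ?_⟩
      · ext x
        simp only [Finset.mem_filter, Multiset.mem_toFinset, addp_parts,
          Multiset.mem_add, Finset.mem_singleton]
        constructor
        · rintro ⟨hmem | hmem, hx⟩
          · exact absurd hx (mem_odds.mp hQ x hmem)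
          · exact Multiset.eq_of_mem_replicate hmem
        · rintro rfl
          exact ⟨Or.inr (Multiset.mem_replicate.mpr ⟨hc.ne', rfl⟩), hj⟩
      · have : Q.parts.count j = 0 := by
          rw [Multiset.count_eq_zero]
          intro hmem
          exact mem_odds.mp hQ j hmem hj
        simp [Multiset.count_replicate, this]
    · intro P hP
      ext1
      simp only [addp_parts, subp_parts]
      exact tsub_add_cancel_of_le
        (Multiset.le_count_iff_replicate_le.mp ((Finset.mem_filter.mp hP).2.2.ge))
    · intro Q hQ
      ext1
      simp
  · rw [Finset.card_eq_zero, Finset.eq_empty_iff_forall_notMem]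
    intro P hP
    obtain ⟨-, -, hcount⟩ := Finset.mem_filter.mp hP
    have h3 := count_mul_le P j
    rw [hcount] at h3
    omega

/-- The key function sending a partition in the A-set to (even part value, multiplicity - 1). -/
def key {n : ℕ} (P : n.Partition) : ℕ × ℕ :=
  ((P.parts.toFinset.filter (fun p => Even p)).sum id,
    P.parts.count ((P.parts.toFinset.filter (fun p => Even p)).sum id) - 1)

lemma lhs_eq (n : ℕ) (hn : 0 < n) :
    ((Finset.univ.filter (fun P : n.Partition =>
        (P.parts.toFinset.filter (fun p => Even p)).card = 1)).card : ℤ)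
      = ∑ j ∈ Finset.Icc 1 n, ∑ m ∈ Finset.range n,
          (if Even j ∧ j * (m + 1) ≤ n then (pO (n - j * (m + 1)) : ℤ) else 0) := by
  set A := Finset.univ.filter (fun P : n.Partition =>
      (P.parts.toFinset.filter (fun p => Even p)).card = 1) with hA
  -- every P ∈ A has its even-set equal to a singleton {e}, e ∈ parts
  have hmem : ∀ P ∈ A, ∃ e, P.parts.toFinset.filter (fun p => Even p) = {e} ∧
      e ∈ P.parts ∧ Even e ∧ key P = (e, P.parts.count e - 1) := by
    intro P hP
    obtain ⟨e, he⟩ := Finset.card_eq_one.mp (Finset.mem_filter.mp hP).2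
    refine ⟨e, he, ?_, ?_, ?_⟩
    · have : e ∈ P.parts.toFinset.filter (fun p => Even p) := by rw [he]; simp
      exact Multiset.mem_toFinset.mp (Finset.mem_filter.mp this).1
    · have : e ∈ P.parts.toFinset.filter (fun p => Even p) := by rw [he]; simp
      exact (Finset.mem_filter.mp this).2
    · rw [key, he]; simp
  have step : A.card = ∑ p ∈ Finset.Icc 1 n ×ˢ Finset.range n,
      (A.filter (fun P => key P = p)).card := by
    apply Finset.card_eq_sum_card_fiberwise
    intro P hP
    obtain ⟨e, hset, hmemp, heven, hkey⟩ := hmem P hP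
    rw [hkey, Finset.mem_coe, Finset.mem_product, Finset.mem_Icc, Finset.mem_range]
    have h1 : 0 < e := P.parts_pos hmemp
    have h2 : e ≤ n := part_le P hmemp
    have h3 : 0 < P.parts.count e := Multiset.count_pos.mpr hmemp
    have h4 : P.parts.count e ≤ n :=
      le_trans (Multiset.count_le_card _ _) (card_parts_le P)
    exact ⟨⟨h1, h2⟩, by omega⟩
  have fiber : ∀ j m : ℕ, 0 < j → (A.filter (fun P => key P = (j, m))).card
      = if Even j ∧ j * (m + 1) ≤ n then pO (n - j * (m + 1)) else 0 := by
    intro j m hj0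
    by_cases hj : Even j
    · have heq : A.filter (fun P => key P = (j, m)) = Finset.univ.filter (fun P : n.Partition =>
          P.parts.toFinset.filter (fun p => Even p) = {j} ∧ P.parts.count j = m + 1) := by
        ext P
        constructor
        · intro hP
          obtain ⟨hPA, hkey⟩ := Finset.mem_filter.mp hP
          obtain ⟨e, hset, hmemp, heven, hkeyP⟩ := hmem P hPA
          rw [hkeyP] at hkey
          have he : e = j := congrArg Prod.fst hkey
          have hm : P.parts.count e - 1 = m := congrArg Prod.snd hkey
          have h3 : 0 < P.parts.count e := Multiset.count_pos.mpr hmemp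
          subst he
          rw [Finset.mem_filter]
          exact ⟨Finset.mem_univ _, hset, by omega⟩
        · intro hP
          obtain ⟨-, hset, hcount⟩ := Finset.mem_filter.mp hP
          have hAmem : P ∈ A := by
            rw [hA, Finset.mem_filter]
            exact ⟨Finset.mem_univ _, by rw [hset]; simp⟩
          rw [Finset.mem_filter]
          refine ⟨hAmem, ?_⟩
          rw [key, hset]
          simp only [Finset.sum_singleton, id_eq]
          rw [hcount]
          simp
      rw [heq, card_Ajm n j (m+1) hj hj0 (Nat.succ_pos m)]
      simp [hj]
    · -- j not even: fiber empty and RHS 0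
      rw [if_neg (by tauto), Finset.card_eq_zero, Finset.eq_empty_iff_forall_notMem]
      intro P hP
      obtain ⟨hPA, hkey⟩ := Finset.mem_filter.mp hP
      obtain ⟨e, hset, hmemp, heven, hkeyP⟩ := hmem P hPA
      rw [hkeyP] at hkey
      have : e = j := congrArg Prod.fst hkey
      exact hj (this ▸ heven)
  rw [step]
  push_cast
  rw [Finset.sum_product]
  refine Finset.sum_congr rfl fun j hj => Finset.sum_congr rfl fun m _ => ?_
  rw [fiber j m (by simp at hj; omega)]
  split_ifs <;> simp

def f (n j : ℕ) : ℕ := ((Nat.Partition.distincts n).filter (fun P : n.Partition => j ∈ P.parts)).card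

lemma f_eq_zero (n j : ℕ) (h : ¬ j ≤ n) : f n j = 0 := by
  rw [f, Finset.card_eq_zero, Finset.eq_empty_iff_forall_notMem]
  intro P hP
  exact h (part_le P (Finset.mem_filter.mp hP).2)

lemma f_rec (n j : ℕ) (hj : 0 < j) (hjn : j ≤ n) :
    f n j = pD (n - j) - f (n - j) j ∧ f (n - j) j ≤ pD (n - j) := by
  have hk : n - j + (({j} : Multiset ℕ)).sum = n := by simp; omega
  have key : f n j = ((Nat.Partition.distincts (n - j)).filter
      (fun P => j ∉ P.parts)).card := by
    rw [f]
    refine Finset.card_bij'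
      (fun P hP => subp P {j} (Multiset.singleton_le.mpr (Finset.mem_filter.mp hP).2) hk)
      (fun Q _ => addp Q {j} (fun i hi => by rw [Multiset.mem_singleton.mp hi]; exact hj) hk)
      ?_ ?_ ?_ ?_
    · intro P hP
      obtain ⟨hPD, hmem⟩ := Finset.mem_filter.mp hP
      have hnd : P.parts.Nodup := mem_distincts.mp hPD
      rw [Finset.mem_filter]
      constructor
      · rw [mem_distincts]
        simp only [subp_parts, Multiset.sub_singleton]
        exact hnd.erase j
      · simp only [subp_parts, Multiset.sub_singleton]
        exact hnd.notMem_erase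
    · intro Q hQ
      obtain ⟨hQD, hmem⟩ := Finset.mem_filter.mp hQ
      rw [Finset.mem_filter]
      constructor
      · rw [mem_distincts]
        simp only [addp_parts]
        rw [add_comm, Multiset.singleton_add, Multiset.nodup_cons]
        exact ⟨hmem, mem_distincts.mp hQD⟩
      · simp [addp_parts]
    · intro P hP
      ext1
      simp only [addp_parts, subp_parts]
      exact tsub_add_cancel_of_le (Multiset.singleton_le.mpr (Finset.mem_filter.mp hP).2)
    · intro Q hQ
      ext1
      simp
  have hsplit : ((Nat.Partition.distincts (n - j)).filter (fun P : (n-j).Partition => j ∈ P.parts)).card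
      + ((Nat.Partition.distincts (n - j)).filter (fun P : (n-j).Partition => j ∉ P.parts)).card
      = pD (n - j) := by
    rw [pD]
    exact Finset.card_filter_add_card_filter_not (fun P : (n-j).Partition => j ∈ P.parts)
  rw [key]
  unfold f
  omega

def T (n j : ℕ) : ℤ :=
  ∑ m ∈ Finset.range n,
    (if j * (m + 1) ≤ n then (-1) ^ m * (pD (n - j * (m + 1)) : ℤ) else 0)

lemma T_eq_zero (n j : ℕ) (h : ¬ j ≤ n) : T n j = 0 := by
  rw [T]
  apply Finset.sum_eq_zero
  intro m _
  rw [if_neg]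
  intro hc
  have : j ≤ j * (m + 1) := Nat.le_mul_of_pos_right j (Nat.succ_pos m)
  omega

lemma T_rec (n j : ℕ) (hj : 0 < j) (hjn : j ≤ n) (hn : 0 < n) :
    T n j = (pD (n - j) : ℤ) - T (n - j) j := by
  obtain ⟨n', rfl⟩ : ∃ n', n = n' + 1 := ⟨n - 1, by omega⟩
  rw [T, Finset.sum_range_succ']
  have h0 : (if j * (0 + 1) ≤ n' + 1 then (-1 : ℤ) ^ 0 * (pD (n' + 1 - j * (0 + 1)) : ℤ) else 0)
      = (pD (n' + 1 - j) : ℤ) := by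
    rw [if_pos (by omega)]
    simp
  rw [h0]
  have hT : T (n' + 1 - j) j
      = - ∑ m ∈ Finset.range n',
          (if j * (m + 1 + 1) ≤ n' + 1 then (-1 : ℤ) ^ (m + 1) * (pD (n' + 1 - j * (m + 1 + 1)) : ℤ) else 0) := by
    rw [T, ← Finset.sum_subset (Finset.range_subset_range.mpr (show n' + 1 - j ≤ n' by omega))
      (fun m hm1 hm2 => ?_), ← Finset.sum_neg_distrib]
    · apply Finset.sum_congr rfl
      intro m _
      by_cases hc : j * (m + 1) ≤ n' + 1 - j
      · have hc2 : j * (m + 1 + 1) ≤ n' + 1 := by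
          have : j * (m + 1 + 1) = j * (m + 1) + j := by ring
          omega
        rw [if_pos hc, if_pos hc2]
        have harg : n' + 1 - j - j * (m + 1) = n' + 1 - j * (m + 1 + 1) := by
          have : j * (m + 1 + 1) = j * (m + 1) + j := by ring
          omega
        rw [harg, pow_succ]
        ring
      · have hc2 : ¬ j * (m + 1 + 1) ≤ n' + 1 := by
          have : j * (m + 1 + 1) = j * (m + 1) + j := by ring
          omega
        rw [if_neg hc, if_neg hc2]
        simp
    · rw [Finset.mem_range, not_lt] at hm2
      have h1 : m + 1 ≤ j * (m + 1) := Nat.le_mul_of_pos_left (m + 1) hj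
      have h2 : j * (m + 1 + 1) = j * (m + 1) + j := by ring
      rw [if_neg (by omega)]
  rw [hT]
  ring

lemma f_eq_T (j : ℕ) (hj : 0 < j) : ∀ n, (f n j : ℤ) = T n j := by
  intro n
  induction n using Nat.strong_induction_on with
  | _ n ih =>
    by_cases hjn : j ≤ n
    · have hn : 0 < n := lt_of_lt_of_le hj hjn
      obtain ⟨hrec, hle⟩ := f_rec n j hj hjn
      rw [T_rec n j hj hjn hn, ← ih (n - j) (by omega), hrec]
      push_cast [hle]
      ring
    · rw [f_eq_zero n j hjn, T_eq_zero n j hjn]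
      simp


lemma card_parts_eq_sum_count {n : ℕ} (P : n.Partition) :
    Multiset.card P.parts = ∑ j ∈ Finset.Icc 1 n, P.parts.count j := by
  rw [← Multiset.toFinset_sum_count_eq]
  apply Finset.sum_subset
  · intro i hi
    rw [Multiset.mem_toFinset] at hi
    rw [Finset.mem_Icc]
    exact ⟨P.parts_pos hi, part_le P hi⟩
  · intro i _ hi
    rw [Multiset.count_eq_zero, ← Multiset.mem_toFinset]
    exact hi

lemma count_sum_boole {n c : ℕ} (hc : c ≤ n) :
    (c : ℤ) = ∑ m ∈ Finset.range n, (if m + 1 ≤ c then (1 : ℤ) else 0) := by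
  have h : (Finset.range n).filter (fun m => m + 1 ≤ c) = Finset.range c := by
    ext m
    simp only [Finset.mem_filter, Finset.mem_range]
    omega
  rw [Finset.sum_boole, h, Finset.card_range]

lemma sum_count_eq {n j : ℕ} (s : Finset n.Partition) :
    ∑ P ∈ s, (P.parts.count j : ℤ)
      = ∑ m ∈ Finset.range n, ((s.filter (fun P => m + 1 ≤ P.parts.count j)).card : ℤ) := by
  have h : ∀ P ∈ s, (P.parts.count j : ℤ)
      = ∑ m ∈ Finset.range n, (if m + 1 ≤ P.parts.count j then (1 : ℤ) else 0) :=
    fun P _ => count_sum_boole (le_trans (Multiset.count_le_card _ _) (card_parts_le P))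
  rw [Finset.sum_congr rfl h, Finset.sum_comm]
  apply Finset.sum_congr rfl
  intro m _
  rw [Finset.sum_boole]

lemma odds_sum_parts (n : ℕ) :
    ∑ P ∈ Nat.Partition.odds n, (Multiset.card P.parts : ℤ)
      = ∑ j ∈ Finset.Icc 1 n, ∑ m ∈ Finset.range n,
          (if ¬ Even j ∧ j * (m + 1) ≤ n then (pO (n - j * (m + 1)) : ℤ) else 0) := by
  have step1 : ∑ P ∈ Nat.Partition.odds n, (Multiset.card P.parts : ℤ)
      = ∑ j ∈ Finset.Icc 1 n, ∑ P ∈ Nat.Partition.odds n, (P.parts.count j : ℤ) := by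
    rw [Finset.sum_comm]
    apply Finset.sum_congr rfl
    intro P _
    exact_mod_cast card_parts_eq_sum_count P
  rw [step1]
  apply Finset.sum_congr rfl
  intro j _
  rw [sum_count_eq]
  apply Finset.sum_congr rfl
  intro m _
  by_cases hj : Even j
  · rw [if_neg (by tauto)]
    norm_cast
    rw [Finset.card_eq_zero, Finset.eq_empty_iff_forall_notMem]
    intro P hP
    obtain ⟨hPO, hcnt⟩ := Finset.mem_filter.mp hP
    have hmem : j ∈ P.parts := Multiset.count_pos.mp (by omega)
    exact mem_odds.mp hPO j hmem hj
  · rw [card_filter_count_odds n j (m + 1) hj (Nat.succ_pos m)]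
    by_cases hle : j * (m + 1) ≤ n
    · rw [if_pos hle, if_pos ⟨hj, hle⟩]
    · rw [if_neg hle, if_neg (by tauto)]
      simp

lemma distincts_sum_parts (n : ℕ) :
    ∑ P ∈ Nat.Partition.distincts n, (Multiset.card P.parts : ℤ)
      = ∑ j ∈ Finset.Icc 1 n, (f n j : ℤ) := by
  have step1 : ∑ P ∈ Nat.Partition.distincts n, (Multiset.card P.parts : ℤ)
      = ∑ j ∈ Finset.Icc 1 n, ∑ P ∈ Nat.Partition.distincts n, (P.parts.count j : ℤ) := by
    rw [Finset.sum_comm]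
    apply Finset.sum_congr rfl
    intro P _
    exact_mod_cast card_parts_eq_sum_count P
  rw [step1]
  apply Finset.sum_congr rfl
  intro j _
  have h : ∀ P ∈ Nat.Partition.distincts n, (P.parts.count j : ℤ)
      = (if j ∈ P.parts then (1 : ℤ) else 0) := by
    intro P hP
    by_cases hmem : j ∈ P.parts
    · rw [if_pos hmem, Multiset.count_eq_one_of_mem (mem_distincts.mp hP) hmem]
      norm_num
    · rw [if_neg hmem, Multiset.count_eq_zero_of_notMem hmem]
      norm_num
  rw [Finset.sum_congr rfl h, Finset.sum_boole, f]

lemma pD_eq_pO : ∀ m, (pD m : ℤ) = (pO m : ℤ) := by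
  intro m
  rw [pD, pO, Theorems100.partition_theorem m]

lemma distincts_sum_parts' (n : ℕ) :
    ∑ P ∈ Nat.Partition.distincts n, (Multiset.card P.parts : ℤ)
      = ∑ j ∈ Finset.Icc 1 n, ∑ m ∈ Finset.range n,
          (if j * (m + 1) ≤ n then (-1 : ℤ) ^ m * (pO (n - j * (m + 1)) : ℤ) else 0) := by
  rw [distincts_sum_parts]
  apply Finset.sum_congr rfl
  intro j hj
  rw [Finset.mem_Icc] at hj
  rw [f_eq_T j (by omega) n, T]
  apply Finset.sum_congr rfl
  intro m _
  split_ifs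
  · rw [pD_eq_pO]
  · rfl

lemma sum_Icc_to_range {n : ℕ} (g : ℕ → ℤ) :
    ∑ k ∈ Finset.Icc 1 n, g k = ∑ m ∈ Finset.range n, g (m + 1) := by
  rw [← Finset.Ico_add_one_right_eq_Icc, Finset.sum_Ico_eq_sum_range]
  simp [Nat.add_comm]

lemma sym_sum (n : ℕ) :
    ∑ j ∈ Finset.Icc 1 n, ∑ k ∈ Finset.Icc 1 n,
      (((-1 : ℤ) ^ j - (-1 : ℤ) ^ k) * (if j * k ≤ n then (pO (n - j * k) : ℤ) else 0)) = 0 := by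
  set F : ℕ → ℕ → ℤ := fun j k =>
    ((-1 : ℤ) ^ j - (-1 : ℤ) ^ k) * (if j * k ≤ n then (pO (n - j * k) : ℤ) else 0) with hF
  have hanti : ∀ j k, F j k = - F k j := by
    intro j k
    rw [hF]
    simp only
    rw [mul_comm k j]
    ring
  have h1 : ∑ j ∈ Finset.Icc 1 n, ∑ k ∈ Finset.Icc 1 n, F j k
      = ∑ k ∈ Finset.Icc 1 n, ∑ j ∈ Finset.Icc 1 n, F j k := Finset.sum_comm
  have h2 : ∑ k ∈ Finset.Icc 1 n, ∑ j ∈ Finset.Icc 1 n, F j k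
      = - ∑ k ∈ Finset.Icc 1 n, ∑ j ∈ Finset.Icc 1 n, F k j := by
    rw [← Finset.sum_neg_distrib]
    refine Finset.sum_congr rfl fun k _ => ?_
    rw [← Finset.sum_neg_distrib]
    exact Finset.sum_congr rfl fun j _ => hanti j k
  show ∑ j ∈ Finset.Icc 1 n, ∑ k ∈ Finset.Icc 1 n, F j k = 0
  have h3 := h1.trans h2
  omega

theorem main (n : ℕ) (hn : 0 < n) :
    ((Finset.univ.filter (fun P : n.Partition =>
        (P.parts.toFinset.filter (fun p => Even p)).card = 1)).card : ℤ) =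
      (∑ P ∈ Nat.Partition.odds n, (Multiset.card P.parts : ℤ)) -
        ∑ P ∈ Nat.Partition.distincts n, (Multiset.card P.parts : ℤ) := by
  rw [lhs_eq n hn, odds_sum_parts n, distincts_sum_parts' n]
  have key : ∀ j, ∀ m, (if Even j ∧ j * (m + 1) ≤ n then (pO (n - j * (m + 1)) : ℤ) else 0)
      - ((if ¬ Even j ∧ j * (m + 1) ≤ n then (pO (n - j * (m + 1)) : ℤ) else 0)
        - (if j * (m + 1) ≤ n then (-1 : ℤ) ^ m * (pO (n - j * (m + 1)) : ℤ) else 0))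
      = ((-1 : ℤ) ^ j - (-1 : ℤ) ^ (m + 1))
          * (if j * (m + 1) ≤ n then (pO (n - j * (m + 1)) : ℤ) else 0) := by
    intro j m
    by_cases hle : j * (m + 1) ≤ n
    · by_cases hj : Even j
      · rw [if_pos ⟨hj, hle⟩, if_neg (by tauto), if_pos hle, if_pos hle, hj.neg_one_pow,
          pow_succ]
        ring
      · rw [if_neg (by tauto), if_pos ⟨hj, hle⟩, if_pos hle, if_pos hle,
          (Nat.not_even_iff_odd.mp hj).neg_one_pow, pow_succ]
        ring
    · rw [if_neg (by tauto), if_neg (by tauto), if_neg hle, if_neg hle]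
      ring
  have expand : ∑ j ∈ Finset.Icc 1 n, ∑ m ∈ Finset.range n,
        ((if Even j ∧ j * (m + 1) ≤ n then (pO (n - j * (m + 1)) : ℤ) else 0)
        - ((if ¬ Even j ∧ j * (m + 1) ≤ n then (pO (n - j * (m + 1)) : ℤ) else 0)
          - (if j * (m + 1) ≤ n then (-1 : ℤ) ^ m * (pO (n - j * (m + 1)) : ℤ) else 0)))
      = ∑ j ∈ Finset.Icc 1 n, ∑ k ∈ Finset.Icc 1 n,
          (((-1 : ℤ) ^ j - (-1 : ℤ) ^ k) * (if j * k ≤ n then (pO (n - j * k) : ℤ) else 0)) := by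
    apply Finset.sum_congr rfl
    intro j _
    rw [sum_Icc_to_range (fun k => ((-1 : ℤ) ^ j - (-1 : ℤ) ^ k)
      * (if j * k ≤ n then (pO (n - j * k) : ℤ) else 0))]
    apply Finset.sum_congr rfl
    intro m _
    exact key j m
  have e0 := expand.trans (sym_sum n)
  simp only [Finset.sum_sub_distrib] at e0
  omega

end AndrewsAux


open Finset

theorem andrews_a_eq_b (n : ℕ) (hn : 0 < n) :
    ((Finset.univ.filter (fun P : n.Partition =>
        (P.parts.toFinset.filter (fun p => Even p)).card = 1)).card : ℤ) =
      (∑ P ∈ Nat.Partition.odds n, (Multiset.card P.parts : ℤ)) -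
        ∑ P ∈ Nat.Partition.distincts n, (Multiset.card P.parts : ℤ) := by
  exact AndrewsAux.main n hn
end
end

section
/- For every positive integer n, the number of partitions of n in which exactly one part value appears exactly three times while all other part values appear exactly once, equals the difference between the total number of parts in all partitions of n into distinct parts and the total number of distinct part values appearing in all partitions of n into odd parts. -/
open PowerSeries

open Finset Nat.Partition

namespace AndrewsAux

def dd (m : ℕ) : ℕ := (distincts m).card
def Cc (m k : ℕ) : ℕ := ((distincts m).filter (fun P => k ∈ P.parts)).card
def Ee (k m : ℕ) : ℕ := ((distincts m).filter (fun P => k ∉ P.parts)).card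
def Oo (m v : ℕ) : ℕ := ((odds m).filter (fun P => v ∈ P.parts)).card

lemma mem_parts_le {m : ℕ} (P : m.Partition) {q : ℕ} (hq : q ∈ P.parts) : q ≤ m := by
  have := Multiset.single_le_sum (fun x _ => Nat.zero_le x) q hq
  simpa [P.parts_sum] using this

lemma Cc_eq_zero {m k : ℕ} (h : m < k) : Cc m k = 0 := by
  rw [Cc, Finset.card_eq_zero, Finset.filter_eq_empty_iff]
  intro P _ hP
  exact absurd (mem_parts_le P hP) (by omega)

lemma dd_eq (m k : ℕ) : dd m = Cc m k + Ee k m := by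
  rw [Cc, Ee, dd, Finset.card_filter_add_card_filter_not]

lemma Cc_eq {m k : ℕ} (hk : 0 < k) (hkm : k ≤ m) : Cc m k = Ee k (m - k) := by
  rw [Cc, Ee]
  refine Finset.card_bij'
    (fun P hP => ⟨P.parts.erase k,
      fun hi => P.parts_pos (Multiset.mem_of_mem_erase hi), by
        have hkP : k ∈ P.parts := (Finset.mem_filter.mp hP).2
        have := Multiset.cons_erase hkP
        have hs : P.parts.sum = m := P.parts_sum
        rw [← this, Multiset.sum_cons] at hs
        omega⟩)
    (fun Q hQ => ⟨k ::ₘ Q.parts,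
      fun hi => by
        rcases Multiset.mem_cons.mp hi with h | h
        · omega
        · exact Q.parts_pos h, by
        rw [Multiset.sum_cons, Q.parts_sum]; omega⟩)
    ?_ ?_ ?_ ?_
  · intro P hP
    rw [Finset.mem_filter] at hP
    obtain ⟨hP1, hP2⟩ := hP
    have hnd : P.parts.Nodup := by simpa [distincts] using hP1
    rw [Finset.mem_filter]
    constructor
    · simp [distincts, hnd.erase k]
    · simp [hnd.mem_erase_iff]
  · intro Q hQ
    rw [Finset.mem_filter] at hQ
    obtain ⟨hQ1, hQ2⟩ := hQ
    have hnd : Q.parts.Nodup := by simpa [distincts] using hQ1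
    rw [Finset.mem_filter]
    constructor
    · simp only [distincts, Finset.mem_filter, Finset.mem_univ, true_and]
      exact Multiset.nodup_cons.mpr ⟨hQ2, hnd⟩
    · simp [Multiset.mem_cons]
  · intro P hP
    apply Nat.Partition.ext
    exact Multiset.cons_erase (Finset.mem_filter.mp hP).2
  · intro Q hQ
    apply Nat.Partition.ext
    exact Multiset.erase_cons_head k Q.parts

lemma Oo_eq {m v : ℕ} (hv : Odd v) (hvm : v ≤ m) : Oo m v = (odds (m - v)).card := by
  have hv0 : 0 < v := hv.pos
  rw [Oo]
  refine Finset.card_bij'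
    (fun P hP => ⟨P.parts.erase v,
      fun hi => P.parts_pos (Multiset.mem_of_mem_erase hi), by
        have hkP : v ∈ P.parts := (Finset.mem_filter.mp hP).2
        have := Multiset.cons_erase hkP
        have hs : P.parts.sum = m := P.parts_sum
        rw [← this, Multiset.sum_cons] at hs
        omega⟩)
    (fun Q hQ => ⟨v ::ₘ Q.parts,
      fun hi => by
        rcases Multiset.mem_cons.mp hi with h | h
        · omega
        · exact Q.parts_pos h, by
        rw [Multiset.sum_cons, Q.parts_sum]; omega⟩)
    ?_ ?_ ?_ ?_
  · intro P hP
    rw [Finset.mem_filter] at hP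
    obtain ⟨hP1, hP2⟩ := hP
    simp only [odds, restricted, Finset.mem_filter, Finset.mem_univ, true_and] at hP1 ⊢
    exact fun i hi => hP1 i (Multiset.mem_of_mem_erase hi)
  · intro Q hQ
    simp only [odds, restricted, Finset.mem_filter, Finset.mem_univ, true_and] at hQ
    rw [Finset.mem_filter]
    refine ⟨?_, ?_⟩
    · simp only [odds, restricted, Finset.mem_filter, Finset.mem_univ, true_and]
      intro i hi
      rcases Multiset.mem_cons.mp hi with h | h
      · exact h ▸ (Nat.not_even_iff_odd.mpr hv)
      · exact hQ i h
    · simp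
  · intro P hP
    apply Nat.Partition.ext
    exact Multiset.cons_erase (Finset.mem_filter.mp hP).2
  · intro Q hQ
    apply Nat.Partition.ext
    exact Multiset.erase_cons_head v Q.parts

lemma Oo_eq_zero_even {m v : ℕ} (hv : ¬ Odd v) : Oo m v = 0 := by
  rw [Oo, Finset.card_eq_zero, Finset.filter_eq_empty_iff]
  intro P hP hmem
  simp only [odds, restricted, Finset.mem_filter, Finset.mem_univ, true_and] at hP
  exact hv (Nat.not_even_iff_odd.mp (hP v hmem))


def c1set (n : ℕ) : Finset n.Partition :=
  Finset.univ.filter (fun P : n.Partition =>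
    ∃ p ∈ P.parts.toFinset, P.parts.count p = 3 ∧
      ∀ q ∈ P.parts.toFinset, q ≠ p → P.parts.count q = 1)

def tp {n : ℕ} (P : n.Partition) : ℕ :=
  (P.parts.toFinset.filter (fun q => P.parts.count q = 3)).sum id

lemma tp_eq {n : ℕ} {P : n.Partition} {p : ℕ} (hp : p ∈ P.parts.toFinset)
    (h3 : P.parts.count p = 3)
    (h1 : ∀ q ∈ P.parts.toFinset, q ≠ p → P.parts.count q = 1) : tp P = p := by
  have hset : P.parts.toFinset.filter (fun q => P.parts.count q = 3) = {p} := by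
    ext q
    simp only [Finset.mem_filter, Finset.mem_singleton]
    constructor
    · rintro ⟨hq, hq3⟩
      by_contra hqp
      have := h1 q hq hqp
      omega
    · rintro rfl
      exact ⟨hp, h3⟩
  rw [tp, hset, Finset.sum_singleton, id]

lemma count_three_of_mem_c1set {n : ℕ} {P : n.Partition} (hP : P ∈ c1set n) {k : ℕ} :
    tp P = k ↔ P.parts.count k = 3 := by
  simp only [c1set, Finset.mem_filter, Finset.mem_univ, true_and] at hP
  obtain ⟨p, hp, h3, h1⟩ := hP
  have htp : tp P = p := tp_eq hp h3 h1
  constructor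
  · rintro rfl
    rw [htp]; exact h3
  · intro hk3
    have hkmem : k ∈ P.parts.toFinset := by
      rw [Multiset.mem_toFinset, ← Multiset.count_pos]
      omega
    have : k = p := by
      by_contra hkp
      have := h1 k hkmem hkp
      omega
    rw [htp, this]

lemma c1_fiber {n k : ℕ} (hk : 0 < k) (h3k : 3 * k ≤ n) :
    ((c1set n).filter (fun P => P.parts.count k = 3)).card = Ee k (n - 3 * k) := by
  rw [Ee]
  have key : ∀ P : n.Partition, P.parts.count k = 3 →
      P.parts.filter (fun a => a ≠ k) + Multiset.replicate 3 k = P.parts := by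
    intro P hc
    have h1 : P.parts.filter (fun a => ¬ a ≠ k) = Multiset.replicate 3 k := by
      have : P.parts.filter (fun a => ¬ a ≠ k) = P.parts.filter (fun a => a = k) := by
        apply Multiset.filter_congr
        intro x _
        simp
      rw [this, Multiset.filter_eq', hc]
    calc P.parts.filter (fun a => a ≠ k) + Multiset.replicate 3 k
        = P.parts.filter (fun a => a ≠ k) + P.parts.filter (fun a => ¬ a ≠ k) := by rw [h1]
      _ = P.parts := Multiset.filter_add_not _ _
  refine Finset.card_bij'
    (fun P hP => ⟨P.parts.filter (fun a => a ≠ k),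
      fun hi => P.parts_pos (Multiset.mem_of_mem_filter hi), by
        have hc : P.parts.count k = 3 := (Finset.mem_filter.mp hP).2
        have := congrArg Multiset.sum (key P hc)
        rw [Multiset.sum_add, Multiset.sum_replicate, P.parts_sum] at this
        simp only [smul_eq_mul] at this
        omega⟩)
    (fun Q hQ => ⟨Q.parts + Multiset.replicate 3 k,
      fun hi => by
        rcases Multiset.mem_add.mp hi with h | h
        · exact Q.parts_pos h
        · rw [Multiset.eq_of_mem_replicate h]; exact hk, by
        rw [Multiset.sum_add, Multiset.sum_replicate, Q.parts_sum]
        simp only [smul_eq_mul]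
        omega⟩)
    ?_ ?_ ?_ ?_
  · -- forward membership
    intro P hP
    rw [Finset.mem_filter] at hP
    obtain ⟨hPc1, hc⟩ := hP
    simp only [c1set, Finset.mem_filter, Finset.mem_univ, true_and] at hPc1
    obtain ⟨p, hp, hp3, hp1⟩ := hPc1
    have hpk : p = k := by
      by_contra hpk
      have hkmem : k ∈ P.parts.toFinset := by
        rw [Multiset.mem_toFinset, ← Multiset.count_pos]; omega
      have := hp1 k hkmem (fun h => hpk h.symm)
      omega
    rw [Finset.mem_filter]
    constructor
    · simp only [distincts, Finset.mem_filter, Finset.mem_univ, true_and]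
      rw [Multiset.nodup_iff_count_le_one]
      intro q
      rw [Multiset.count_filter]
      by_cases hq : q = k
      · simp [hq]
      · simp only [ne_eq, hq, not_false_eq_true, if_true]
        by_cases hqm : q ∈ P.parts.toFinset
        · rw [hp1 q hqm (by rw [hpk]; exact hq)]
        · rw [Multiset.mem_toFinset] at hqm
          rw [Multiset.count_eq_zero_of_notMem hqm]
          omega
    · intro hmem
      exact (Multiset.of_mem_filter hmem) rfl
  · -- backward membership
    intro Q hQ
    rw [Finset.mem_filter] at hQ
    obtain ⟨hQd, hQk⟩ := hQ
    have hnd : Q.parts.Nodup := by simpa [distincts] using hQd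
    rw [Finset.mem_filter]
    have hcount : ∀ q : ℕ, (Q.parts + Multiset.replicate 3 k).count q
        = Q.parts.count q + (if q = k then 3 else 0) := by
      intro q
      rw [Multiset.count_add, Multiset.count_replicate]
      rcases eq_or_ne q k with h | h
      · simp [h]
      · simp [h, Ne.symm h]
    have hck : (Q.parts + Multiset.replicate 3 k).count k = 3 := by
      rw [hcount k, Multiset.count_eq_zero_of_notMem hQk]
      simp
    refine ⟨?_, hck⟩
    simp only [c1set, Finset.mem_filter, Finset.mem_univ, true_and]
    refine ⟨k, ?_, hck, ?_⟩
    · rw [Multiset.mem_toFinset, ← Multiset.count_pos, hck]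
      omega
    · intro q hq hqk
      rw [Multiset.mem_toFinset] at hq
      rw [hcount q, if_neg hqk]
      have hqQ : q ∈ Q.parts := by
        rcases Multiset.mem_add.mp hq with h | h
        · exact h
        · exact absurd (Multiset.eq_of_mem_replicate h) hqk
      have h1 : 1 ≤ Q.parts.count q := Multiset.one_le_count_iff_mem.mpr hqQ
      have h2 : Q.parts.count q ≤ 1 := Multiset.nodup_iff_count_le_one.mp hnd q
      omega
  · -- left inverse
    intro P hP
    apply Nat.Partition.ext
    exact key P (Finset.mem_filter.mp hP).2
  · -- right inverse
    intro Q hQ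
    rw [Finset.mem_filter] at hQ
    apply Nat.Partition.ext
    show (Q.parts + Multiset.replicate 3 k).filter (fun a => a ≠ k) = Q.parts
    rw [Multiset.filter_add]
    have h1 : Q.parts.filter (fun a => a ≠ k) = Q.parts :=
      Multiset.filter_eq_self.mpr (fun a ha => fun h => hQ.2 (h ▸ ha))
    have h2 : (Multiset.replicate 3 k).filter (fun a => a ≠ k) = 0 := by
      apply Multiset.filter_eq_nil.mpr
      intro a ha
      simp [Multiset.eq_of_mem_replicate ha]
    rw [h1, h2, add_zero]

lemma c1set_card (n : ℕ) :
    (c1set n).card = ∑ k ∈ (Icc 1 n).filter (fun k => 3 * k ≤ n), Ee k (n - 3 * k) := by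
  rw [Finset.card_eq_sum_card_fiberwise (f := tp)
    (t := (Icc 1 n).filter (fun k => 3 * k ≤ n)) ?_]
  · apply Finset.sum_congr rfl
    intro k hk
    rw [Finset.mem_filter, Finset.mem_Icc] at hk
    rw [← c1_fiber (by omega) hk.2]
    congr 1
    apply Finset.filter_congr
    intro P hP
    exact count_three_of_mem_c1set hP
  · intro P hP
    have hPc := hP
    simp only [c1set, Finset.mem_coe, Finset.mem_filter, Finset.mem_univ, true_and] at hPc
    obtain ⟨p, hp, hp3, hp1⟩ := hPc
    have htp : tp P = p := tp_eq hp hp3 hp1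
    rw [Finset.mem_coe, Finset.mem_filter, Finset.mem_Icc, htp]
    have hpmem : p ∈ P.parts := Multiset.mem_toFinset.mp hp
    have hppos : 0 < p := P.parts_pos hpmem
    have h3p : 3 * p ≤ n := by
      have hrep : Multiset.replicate 3 p ≤ P.parts :=
        Multiset.le_count_iff_replicate_le.mp (by omega)
      obtain ⟨u, hu⟩ := Multiset.le_iff_exists_add.mp hrep
      have := P.parts_sum
      rw [hu, Multiset.sum_add, Multiset.sum_replicate] at this
      simp only [smul_eq_mul] at this
      omega
    exact ⟨⟨hppos, by omega⟩, h3p⟩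

lemma sumT (n : ℕ) :
    ∑ P ∈ distincts n, Multiset.card P.parts = ∑ k ∈ Icc 1 n, Cc n k := by
  have h1 : ∀ P ∈ distincts n,
      Multiset.card P.parts = ((Icc 1 n).filter (fun k => k ∈ P.parts)).card := by
    intro P hP
    have hnd : P.parts.Nodup := by simpa [distincts] using hP
    have hfe : (Icc 1 n).filter (fun k => k ∈ P.parts) = P.parts.toFinset := by
      ext q
      simp only [Finset.mem_filter, Finset.mem_Icc, Multiset.mem_toFinset]
      exact ⟨fun h => h.2, fun h => ⟨⟨P.parts_pos h, mem_parts_le P h⟩, h⟩⟩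
    rw [hfe, Multiset.toFinset_card_of_nodup hnd]
  rw [Finset.sum_congr rfl h1]
  simp_rw [Finset.card_filter]
  rw [Finset.sum_comm]
  exact Finset.sum_congr rfl fun k _ => (Finset.card_filter _ _).symm

lemma sumO (n : ℕ) :
    ∑ P ∈ odds n, P.parts.toFinset.card = ∑ v ∈ Icc 1 n, Oo n v := by
  have h1 : ∀ P ∈ odds n,
      P.parts.toFinset.card = ((Icc 1 n).filter (fun k => k ∈ P.parts)).card := by
    intro P _
    congr 1
    ext q
    simp only [Finset.mem_filter, Finset.mem_Icc, Multiset.mem_toFinset]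
    exact ⟨fun h => ⟨⟨P.parts_pos h, mem_parts_le P h⟩, h⟩, fun h => h.2⟩
  rw [Finset.sum_congr rfl h1]
  simp_rw [Finset.card_filter]
  rw [Finset.sum_comm]
  exact Finset.sum_congr rfl fun k _ => (Finset.card_filter _ _).symm

lemma perk {n k : ℕ} (hk1 : 1 ≤ k) (hkn : k ≤ n) :
    Cc n k + (if 2 * k ≤ n then dd (n - 2 * k) else 0)
      = dd (n - k) + (if 3 * k ≤ n then Ee k (n - 3 * k) else 0) := by
  have e1 : Cc n k = Ee k (n - k) := Cc_eq (by omega) hkn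
  by_cases h2 : 2 * k ≤ n
  · have e2 : Cc (n - k) k = Ee k (n - 2 * k) := by
      rw [Cc_eq (by omega) (by omega)]
      congr 1 <;> omega
    have d1 := dd_eq (n - k) k
    rw [e2] at d1
    by_cases h3 : 3 * k ≤ n
    · have e3 : Cc (n - 2 * k) k = Ee k (n - 3 * k) := by
        rw [Cc_eq (by omega) (by omega)]
        congr 1 <;> omega
      have d2 := dd_eq (n - 2 * k) k
      rw [e3] at d2
      rw [if_pos h2, if_pos h3, e1]
      omega
    · have e3 : Cc (n - 2 * k) k = 0 := Cc_eq_zero (by omega)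
      have d2 := dd_eq (n - 2 * k) k
      rw [e3] at d2
      rw [if_pos h2, if_neg h3, e1]
      omega
  · have e2 : Cc (n - k) k = 0 := Cc_eq_zero (by omega)
    have d1 := dd_eq (n - k) k
    rw [e2] at d1
    rw [if_neg h2, if_neg (by omega : ¬ 3 * k ≤ n), e1]
    omega

lemma parity (n : ℕ) : ∑ k ∈ Icc 1 n, dd (n - k)
    = (∑ k ∈ (Icc 1 n).filter (fun k => 2 * k ≤ n), dd (n - 2 * k))
      + ∑ v ∈ (Icc 1 n).filter (fun v => Odd v), dd (n - v) := by
  rw [← Finset.sum_filter_add_sum_filter_not (Icc 1 n) (fun v => Odd v) (fun v => dd (n - v))]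
  rw [add_comm]
  congr 1
  refine Finset.sum_nbij' (i := fun v => v / 2) (j := fun k => 2 * k) ?_ ?_ ?_ ?_ ?_
  · intro v hv
    simp only [Finset.mem_filter, Finset.mem_Icc, Nat.not_odd_iff_even, Nat.even_iff] at hv ⊢
    omega
  · intro k hk
    simp only [Finset.mem_filter, Finset.mem_Icc, Nat.not_odd_iff_even, Nat.even_iff] at hk ⊢
    omega
  · intro v hv
    simp only [Finset.mem_filter, Finset.mem_Icc, Nat.not_odd_iff_even, Nat.even_iff] at hv
    omega
  · intro k _
    omega
  · intro v hv
    simp only [Finset.mem_filter, Finset.mem_Icc, Nat.not_odd_iff_even, Nat.even_iff] at hv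
    congr 1
    omega

lemma oddsum (n : ℕ) : ∑ v ∈ Icc 1 n, Oo n v
    = ∑ v ∈ (Icc 1 n).filter (fun v => Odd v), dd (n - v) := by
  rw [← Finset.sum_filter_add_sum_filter_not (Icc 1 n) (fun v => Odd v) (fun v => Oo n v)]
  have h2 : ∑ v ∈ (Icc 1 n).filter (fun v => ¬ Odd v), Oo n v = 0 :=
    Finset.sum_eq_zero fun v hv => Oo_eq_zero_even (Finset.mem_filter.mp hv).2
  rw [h2, add_zero]
  apply Finset.sum_congr rfl
  intro v hv
  rw [Finset.mem_filter, Finset.mem_Icc] at hv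
  rw [Oo_eq hv.2 hv.1.2, dd, Theorems100.partition_theorem (n - v)]

lemma main_nat (n : ℕ) :
    (c1set n).card + ∑ P ∈ odds n, P.parts.toFinset.card
      = ∑ P ∈ distincts n, Multiset.card P.parts := by
  rw [sumT, sumO, c1set_card, oddsum]
  have hsum : ∑ k ∈ Icc 1 n, (Cc n k + (if 2 * k ≤ n then dd (n - 2 * k) else 0))
      = ∑ k ∈ Icc 1 n, (dd (n - k) + (if 3 * k ≤ n then Ee k (n - 3 * k) else 0)) := by
    apply Finset.sum_congr rfl
    intro k hk
    rw [Finset.mem_Icc] at hk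
    exact perk hk.1 hk.2
  rw [Finset.sum_add_distrib, Finset.sum_add_distrib, ← Finset.sum_filter,
    ← Finset.sum_filter] at hsum
  have hp := parity n
  omega

end AndrewsAux

open AndrewsAux in
theorem andrews_c1_eq_b1 (n : ℕ) (hn : 0 < n) :
    ((Finset.univ.filter (fun P : n.Partition =>
        ∃ p ∈ P.parts.toFinset, P.parts.count p = 3 ∧
          ∀ q ∈ P.parts.toFinset, q ≠ p → P.parts.count q = 1)).card : ℤ) =
      (∑ P ∈ Nat.Partition.distincts n, (Multiset.card P.parts : ℤ)) -
        ∑ P ∈ Nat.Partition.odds n, (P.parts.toFinset.card : ℤ) := by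
  have h := main_nat n
  have h1 : (∑ P ∈ distincts n, (Multiset.card P.parts : ℤ))
      = ((∑ P ∈ distincts n, Multiset.card P.parts : ℕ) : ℤ) := by
    push_cast
    rfl
  have h2 : (∑ P ∈ odds n, (P.parts.toFinset.card : ℤ))
      = ((∑ P ∈ odds n, P.parts.toFinset.card : ℕ) : ℤ) := by
    push_cast
    rfl
  have hc : (Finset.univ.filter (fun P : n.Partition =>
      ∃ p ∈ P.parts.toFinset, P.parts.count p = 3 ∧
        ∀ q ∈ P.parts.toFinset, q ≠ p → P.parts.count q = 1)) = c1set n := rfl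
  rw [hc, h1, h2, ← h]
  push_cast
  ring
end

section
/- For every positive integer n, the total number of parts over all partitions of n into odd parts minus the total number of parts over all partitions of n into distinct parts equals the sum over all partitions μ of n into distinct parts of wt(μ), where wt(μ) = Σ_j (2^{k_j} − 1) when the parts of μ are written as μ_j = 2^{k_j}·m_j with m_j odd. -/
open Finset

/-- The weight of a multiset of parts: each part `p = 2^k * m` with `m` odd
contributes `2^k - 1`, where `k = p.factorization 2`. -/
def partitionWeight (s : Multiset ℕ) : ℕ :=
  (s.map (fun p => 2 ^ (p.factorization 2) - 1)).sum

namespace GlaisherAux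

open Multiset

/-- The odd part of a natural number. -/
def opart (p : ℕ) : ℕ := p / 2 ^ p.factorization 2

lemma two_pow_mul_opart (p : ℕ) : 2 ^ p.factorization 2 * opart p = p :=
  Nat.ordProj_mul_ordCompl_eq_self p 2

lemma opart_odd {p : ℕ} (hp : p ≠ 0) : Odd (opart p) := by
  have h2 : ¬ (2 ∣ opart p) := Nat.not_dvd_ordCompl Nat.prime_two hp
  rw [Nat.odd_iff]; omega

lemma opart_pos {p : ℕ} (hp : p ≠ 0) : 0 < opart p := Nat.ordCompl_pos 2 hp

lemma fact_two_pow_mul {m : ℕ} (hm : Odd m) (i : ℕ) : (2 ^ i * m).factorization 2 = i := by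
  have hm0 : m ≠ 0 := by rintro rfl; simp [Nat.odd_iff] at hm
  have h2 : ¬ (2 ∣ m) := by rw [Nat.odd_iff] at hm; omega
  rw [Nat.factorization_mul (pow_ne_zero i two_ne_zero) hm0]
  simp [Nat.factorization_pow, Nat.prime_two.factorization,
    Nat.factorization_eq_zero_of_not_dvd h2]

lemma opart_two_pow_mul {m : ℕ} (hm : Odd m) (i : ℕ) : opart (2 ^ i * m) = m := by
  rw [opart, fact_two_pow_mul hm, Nat.mul_div_cancel_left _ (pow_pos two_pos i)]

/-- Glaisher's map from (distinct) partitions to (odd) partitions, at multiset level. -/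
def ford (t : Multiset ℕ) : Multiset ℕ :=
  t.bind fun p => replicate (2 ^ p.factorization 2) (opart p)

/-- Inverse of Glaisher's map, at multiset level. -/
def finv (t : Multiset ℕ) : Multiset ℕ :=
  ∑ m ∈ t.toFinset, ((((t.count m).bitIndices.map fun i => 2 ^ i * m) : List ℕ) : Multiset ℕ)

lemma mem_ford {a : ℕ} {t : Multiset ℕ} : a ∈ ford t ↔ ∃ p ∈ t, opart p = a := by
  simp only [ford, Multiset.mem_bind, Multiset.mem_replicate]
  constructor
  · rintro ⟨p, hp, -, h⟩; exact ⟨p, hp, h.symm⟩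
  · rintro ⟨p, hp, h⟩; exact ⟨p, hp, by positivity, h.symm⟩

lemma ford_add (s t : Multiset ℕ) : ford (s + t) = ford s + ford t := Multiset.add_bind _ _ _

lemma ford_sum {β : Type*} (s : Finset β) (f : β → Multiset ℕ) :
    ford (∑ i ∈ s, f i) = ∑ i ∈ s, ford (f i) := by
  classical
  induction s using Finset.induction_on with
  | empty => simp [ford]
  | insert _ _ h ih =>
    rw [Finset.sum_insert h, Finset.sum_insert h, ford_add, ih]

lemma card_ford (t : Multiset ℕ) :
    Multiset.card (ford t) = (t.map fun p => 2 ^ p.factorization 2).sum := by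
  simp [ford, Multiset.card_bind, Function.comp]

lemma sum_ford {t : Multiset ℕ} (h : ∀ p ∈ t, p ≠ 0) : (ford t).sum = t.sum := by
  induction t using Multiset.induction_on with
  | empty => simp [ford]
  | cons a s ih =>
    rw [ford, Multiset.cons_bind, Multiset.sum_add, ← ford,
      ih (fun p hp => h p (Multiset.mem_cons_of_mem hp)), Multiset.sum_cons,
      Multiset.sum_replicate, smul_eq_mul, two_pow_mul_opart]

lemma bind_replicate (m : ℕ) (g : ℕ → ℕ) (s : Multiset ℕ) :
    (s.bind fun i => replicate (g i) m) = replicate ((s.map g).sum) m := by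
  induction s using Multiset.induction_on with
  | empty => simp
  | cons a s ih =>
    simp [Multiset.cons_bind, ih, Multiset.replicate_add]

lemma ford_finv {t : Multiset ℕ} (h : ∀ x ∈ t, Odd x) : ford (finv t) = t := by
  rw [finv, ford_sum]
  calc ∑ m ∈ t.toFinset,
        ford ((((t.count m).bitIndices.map fun i => 2 ^ i * m) : List ℕ) : Multiset ℕ)
      = ∑ m ∈ t.toFinset, t.count m • ({m} : Multiset ℕ) := by
        refine Finset.sum_congr rfl fun m hm => ?_
        have hmodd : Odd m := h m (Multiset.mem_toFinset.1 hm)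
        rw [ford, ← Multiset.map_coe, Multiset.bind_map]
        have h1 : ∀ i : ℕ,
            (replicate (2 ^ ((2 ^ i * m).factorization 2)) (opart (2 ^ i * m)))
              = replicate (2 ^ i) m := fun i => by
          rw [fact_two_pow_mul hmodd, opart_two_pow_mul hmodd]
        simp only [h1]
        rw [bind_replicate, Multiset.map_coe, Multiset.sum_coe,
          Nat.twoPowSum_bitIndices, Multiset.nsmul_singleton]
    _ = t := Multiset.toFinset_sum_count_nsmul_eq t

lemma bitIndices_sum {K : Multiset ℕ} (hK : K.Nodup) :
    ((((K.map fun i => 2 ^ i).sum).bitIndices : List ℕ) : Multiset ℕ) = K := by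
  have hKL : K = ↑(K.sort (· ≤ ·)) := (Multiset.sort_eq _ _).symm
  have hnd : (K.sort (· ≤ ·)).Nodup := Multiset.coe_nodup.1 (hKL ▸ hK)
  have hs : List.Pairwise (· < ·) (K.sort (· ≤ ·)) :=
    ((Multiset.pairwise_sort K (· ≤ ·)).sortedLE.sortedLT_of_nodup hnd).pairwise
  rw [hKL, Multiset.map_coe, Multiset.sum_coe, Nat.bitIndices_twoPowsum hs.sortedLT]

lemma sum_map_ite (P : ℕ → Prop) [DecidablePred P] (g : ℕ → ℕ) (t : Multiset ℕ) :
    (t.map fun p => if P p then g p else 0).sum = ((t.filter P).map g).sum := by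
  induction t using Multiset.induction_on with
  | empty => simp
  | cons a s ih =>
    by_cases h : P a <;>
      simp [Multiset.filter_cons_of_pos, Multiset.filter_cons_of_neg, h, ih]

lemma count_ford (t : Multiset ℕ) (m : ℕ) :
    (ford t).count m = ((t.filter fun p => opart p = m).map fun p => 2 ^ p.factorization 2).sum := by
  rw [ford, Multiset.count_bind]
  simp only [Multiset.count_replicate]
  exact sum_map_ite _ _ t

lemma finv_ford {t : Multiset ℕ} (hd : t.Nodup) (hp : ∀ x ∈ t, x ≠ 0) : finv (ford t) = t := by
  classical
  rw [finv]
  have key : ∀ m ∈ (ford t).toFinset,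
      ((((ford t).count m).bitIndices.map fun i => 2 ^ i * m : List ℕ) : Multiset ℕ)
        = t.filter fun p => opart p = m := by
    intro m hm
    obtain ⟨p0, hp0t, hp0⟩ := mem_ford.1 (Multiset.mem_toFinset.1 hm)
    have hmodd : Odd m := hp0 ▸ opart_odd (hp p0 hp0t)
    set u := t.filter fun p => opart p = m with hu
    have hun : u.Nodup := hd.filter _
    have hKn : (u.map fun p => p.factorization 2).Nodup := by
      refine hun.map_on ?_
      intro x hx y hy hxy
      have hxm : opart x = m := (Multiset.mem_filter.1 hx).2
      have hym : opart y = m := (Multiset.mem_filter.1 hy).2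
      rw [← two_pow_mul_opart x, ← two_pow_mul_opart y, hxm, hym, hxy]
    have h3 : ((((u.map fun p : ℕ => 2 ^ p.factorization 2).sum).bitIndices : List ℕ) : Multiset ℕ)
        = u.map fun p : ℕ => p.factorization 2 := by
      have := bitIndices_sum hKn
      rwa [Multiset.map_map] at this
    rw [count_ford, ← hu, ← Multiset.map_coe, h3, Multiset.map_map]
    calc u.map ((fun i => 2 ^ i * m) ∘ fun p => p.factorization 2)
        = u.map id := by
          refine Multiset.map_congr rfl fun p hpu => ?_
          have hpm : opart p = m := (Multiset.mem_filter.1 hpu).2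
          simp only [Function.comp, id_eq, ← hpm, two_pow_mul_opart]
      _ = u := Multiset.map_id u
  rw [Finset.sum_congr rfl key]
  ext a
  rw [Multiset.count_sum']
  simp only [Multiset.count_filter]
  rw [Finset.sum_ite_eq]
  by_cases h : opart a ∈ (ford t).toFinset
  · rw [if_pos h]
  · rw [if_neg h, eq_comm, Multiset.count_eq_zero]
    intro hat
    exact h (Multiset.mem_toFinset.2 (mem_ford.2 ⟨a, hat, rfl⟩))

lemma msum_sum {β : Type*} (s : Finset β) (f : β → Multiset ℕ) :
    (∑ i ∈ s, f i).sum = ∑ i ∈ s, (f i).sum := by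
  classical
  induction s using Finset.induction_on with
  | empty => simp
  | insert _ _ h ih =>
    rw [Finset.sum_insert h, Finset.sum_insert h, Multiset.sum_add, ih]

lemma sum_finv (t : Multiset ℕ) : (finv t).sum = t.sum := by
  rw [finv, msum_sum]
  have h1 : ∀ m ∈ t.toFinset,
      (((((t.count m).bitIndices.map fun i => 2 ^ i * m) : List ℕ) : Multiset ℕ)).sum
        = t.count m * m := by
    intro m _
    rw [Multiset.sum_coe, List.sum_map_mul_right, Nat.twoPowSum_bitIndices]
  rw [Finset.sum_congr rfl h1]
  conv_rhs => rw [← Multiset.map_id t]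
  rw [Finset.sum_multiset_map_count t id]
  simp [smul_eq_mul]

lemma mem_finv' {t : Multiset ℕ} {a : ℕ} (ha : a ∈ finv t) :
    ∃ m ∈ t.toFinset, ∃ i, a = 2 ^ i * m := by
  rw [finv] at ha
  obtain ⟨m, hm, ha⟩ := Multiset.mem_sum.1 ha
  rw [Multiset.mem_coe, List.mem_map] at ha
  obtain ⟨i, _, rfl⟩ := ha
  exact ⟨m, hm, i, rfl⟩

lemma nodup_finv {t : Multiset ℕ} (h : ∀ x ∈ t, Odd x) : (finv t).Nodup := by
  classical
  rw [Multiset.nodup_iff_count_le_one]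
  intro a
  rw [finv, Multiset.count_sum']
  calc ∑ m ∈ t.toFinset,
        Multiset.count a ((((t.count m).bitIndices.map fun i => 2 ^ i * m) : List ℕ) : Multiset ℕ)
      ≤ ∑ m ∈ t.toFinset, (if m = opart a then 1 else 0) := by
        refine Finset.sum_le_sum fun m hm => ?_
        have hmodd : Odd m := h m (Multiset.mem_toFinset.1 hm)
        by_cases hma : m = opart a
        · rw [if_pos hma]
          have hnd : ((t.count m).bitIndices.map fun i => 2 ^ i * m).Nodup := by
            refine (Nat.bitIndices_sorted.nodup).map ?_
            intro i j hij
            have hm0 : 0 < m := hmodd.pos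
            have := Nat.eq_of_mul_eq_mul_right hm0 hij
            exact Nat.pow_right_injective le_rfl this
          rw [Multiset.coe_count]
          exact List.nodup_iff_count_le_one.1 hnd a
        · rw [if_neg hma, Nat.le_zero, Multiset.count_eq_zero]
          intro hal
          rw [Multiset.mem_coe, List.mem_map] at hal
          obtain ⟨i, _, rfl⟩ := hal
          exact hma (opart_two_pow_mul hmodd i).symm
    _ ≤ 1 := by
        rw [Finset.sum_ite_eq']
        split <;> simp

/-- Glaisher's map at partition level. -/
def fordP {n : ℕ} (P : n.Partition) : n.Partition where
  parts := ford P.parts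
  parts_pos := fun {i} hi => by
    obtain ⟨p, hp, rfl⟩ := mem_ford.1 hi
    exact opart_pos (P.parts_pos hp).ne'
  parts_sum := by rw [sum_ford (fun p hp => (P.parts_pos hp).ne'), P.parts_sum]

/-- Inverse Glaisher's map at partition level. -/
def finvP {n : ℕ} (Q : n.Partition) : n.Partition where
  parts := finv Q.parts
  parts_pos := fun {a} ha => by
    obtain ⟨m, hm, i, rfl⟩ := mem_finv' ha
    exact Nat.mul_pos (pow_pos two_pos i) (Q.parts_pos (Multiset.mem_toFinset.1 hm))
  parts_sum := by rw [sum_finv, Q.parts_sum]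

lemma mem_odds {n : ℕ} {P : n.Partition} :
    P ∈ Nat.Partition.odds n ↔ ∀ i ∈ P.parts, Odd i := by
  rw [Nat.Partition.odds, Nat.Partition.restricted, Finset.mem_filter]
  simp [Nat.not_even_iff_odd]

lemma mem_distincts {n : ℕ} {P : n.Partition} :
    P ∈ Nat.Partition.distincts n ↔ P.parts.Nodup := by
  simp [Nat.Partition.distincts]

end GlaisherAux

open GlaisherAux

theorem b_eq_sum_of_weights (n : ℕ) (hn : 0 < n) :
    (∑ P ∈ Nat.Partition.odds n, (Multiset.card P.parts : ℤ)) -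
        ∑ P ∈ Nat.Partition.distincts n, (Multiset.card P.parts : ℤ) =
      ∑ P ∈ Nat.Partition.distincts n, (partitionWeight P.parts : ℤ) := by
  classical
  have key : (∑ P ∈ Nat.Partition.odds n, (Multiset.card P.parts : ℤ))
      = ∑ P ∈ Nat.Partition.distincts n,
          (((P.parts.map fun p => 2 ^ p.factorization 2).sum : ℕ) : ℤ) := by
    refine Finset.sum_nbij' (i := finvP) (j := fordP) ?_ ?_ ?_ ?_ ?_
    · intro Q hQ
      exact mem_distincts.2 (nodup_finv (mem_odds.1 hQ))
    · intro P _
      refine mem_odds.2 fun i hi => ?_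
      obtain ⟨p, hp, rfl⟩ := mem_ford.1 hi
      exact opart_odd (P.parts_pos hp).ne'
    · intro Q hQ
      exact Nat.Partition.ext (ford_finv (mem_odds.1 hQ))
    · intro P hP
      exact Nat.Partition.ext
        (finv_ford (mem_distincts.1 hP) (fun p hp => (P.parts_pos hp).ne'))
    · intro Q hQ
      have : Multiset.card Q.parts
          = ((finvP Q).parts.map fun p => 2 ^ p.factorization 2).sum := by
        conv_lhs => rw [show Q.parts = ford (finvP Q).parts from
          (ford_finv (mem_odds.1 hQ)).symm]
        exact card_ford _
      exact_mod_cast congrArg (Nat.cast : ℕ → ℤ) this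
  rw [key, ← Finset.sum_sub_distrib]
  refine Finset.sum_congr rfl fun P hP => ?_
  have h1 : partitionWeight P.parts + Multiset.card P.parts
      = (P.parts.map fun p => 2 ^ p.factorization 2).sum := by
    rw [partitionWeight]
    induction P.parts using Multiset.induction_on with
    | empty => simp
    | cons a s ih =>
      simp only [Multiset.map_cons, Multiset.sum_cons, Multiset.card_cons]
      have h2 : 1 ≤ 2 ^ a.factorization 2 := Nat.one_le_two_pow
      omega
  have h2 := congrArg (Nat.cast : ℕ → ℤ) h1
  push_cast at h2
  omega
end

section
/- For every positive integer n, the difference b1(n) between the total number of parts in all partitions of n into distinct parts and the total number of distinct part values in all partitions of n into odd parts equals the number of overpartitions of n into distinct parts in which exactly one part is overlined, where a part 2^s·m (m odd, s ≥ 0) may be overlined only if some part 2^t·m with t < s also appears. -/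
open Finset

namespace B1

/-- exponent of 2 -/
lemma fact_two_pow_mul {m : ℕ} (hm : ¬ 2 ∣ m) (h0 : 0 < m) (i : ℕ) :
    (2 ^ i * m).factorization 2 = i := by
  rw [Nat.factorization_mul (by positivity) h0.ne', Nat.Prime.factorization_pow]
  simp [Nat.factorization_eq_zero_of_not_dvd hm]
  exact Nat.prime_two

lemma ordCompl_two_pow_mul {m : ℕ} (hm : ¬ 2 ∣ m) (h0 : 0 < m) (i : ℕ) :
    ordCompl[2] (2 ^ i * m) = m := by
  rw [fact_two_pow_mul hm h0 i, Nat.mul_div_cancel_left _ (by positivity)]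

lemma self_eq_two_pow_mul {p : ℕ} (hp : 0 < p) :
    2 ^ (p.factorization 2) * ordCompl[2] p = p :=
  Nat.ordProj_mul_ordCompl_eq_self p 2

lemma ordCompl_odd {p : ℕ} (hp : 0 < p) : ¬ 2 ∣ ordCompl[2] p :=
  Nat.not_dvd_ordCompl Nat.prime_two hp.ne'

lemma ordCompl_pos {p : ℕ} (hp : 0 < p) : 0 < ordCompl[2] p :=
  Nat.ordCompl_pos 2 hp.ne'

/-- the Euler/Glaisher map from odd partitions to distinct: binary expansion of multiplicities -/
def eulerM (s : Multiset ℕ) : Multiset ℕ :=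
  ∑ m ∈ s.toFinset, (((s.count m).bitIndices.map fun i => 2 ^ i * m : List ℕ) : Multiset ℕ)

def glaisherM (s : Multiset ℕ) : Multiset ℕ :=
  s.bind fun p => Multiset.replicate (2 ^ p.factorization 2) (ordCompl[2] p)

lemma mem_eulerM {s : Multiset ℕ} {x : ℕ} :
    x ∈ eulerM s ↔ ∃ m ∈ s.toFinset, ∃ i ∈ (s.count m).bitIndices, x = 2 ^ i * m := by
  simp only [eulerM, Multiset.mem_sum, Multiset.mem_coe, List.mem_map]
  constructor
  · rintro ⟨m, hm, i, hi, rfl⟩; exact ⟨m, hm, i, hi, rfl⟩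
  · rintro ⟨m, hm, i, hi, rfl⟩; exact ⟨m, hm, i, hi, rfl⟩

lemma eulerM_sum (s : Multiset ℕ) : (eulerM s).sum = s.sum := by
  rw [eulerM]
  rw [Multiset.sum_sum]
  have h1 : ∀ m ∈ s.toFinset,
      (((s.count m).bitIndices.map fun i => 2 ^ i * m : List ℕ) : Multiset ℕ).sum
        = s.count m * m := by
    intro m _
    rw [Multiset.sum_coe, List.sum_map_mul_right, Nat.twoPowSum_bitIndices]
  rw [Finset.sum_congr rfl h1]
  conv_rhs => rw [← Multiset.toFinset_sum_count_nsmul_eq s]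
  rw [Multiset.sum_sum]
  refine Finset.sum_congr rfl fun m _ => ?_
  rw [Multiset.sum_nsmul, Multiset.sum_singleton, smul_eq_mul, mul_comm]

lemma glaisherM_sum {s : Multiset ℕ} (hs : ∀ p ∈ s, 0 < p) : (glaisherM s).sum = s.sum := by
  rw [glaisherM, Multiset.sum_bind]
  have : ∀ p ∈ s, (Multiset.replicate (2 ^ p.factorization 2) (ordCompl[2] p)).sum = p := by
    intro p hp
    rw [Multiset.sum_replicate, smul_eq_mul, self_eq_two_pow_mul (hs p hp)]
  rw [Multiset.map_congr rfl this, Multiset.map_id']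


lemma bitIndices_ne_nil {k : ℕ} (hk : k ≠ 0) : k.bitIndices ≠ [] := by
  intro h
  apply hk
  rw [← Nat.twoPowSum_bitIndices k, h]
  simp

lemma nodup_finset_sum {β γ : Type*} [DecidableEq γ] {fs : Finset β} {f : β → Multiset γ}
    (h1 : ∀ b ∈ fs, (f b).Nodup)
    (h2 : ∀ a ∈ fs, ∀ b ∈ fs, a ≠ b → Disjoint (f a) (f b)) :
    (∑ b ∈ fs, f b).Nodup := by
  induction fs using Finset.cons_induction with
  | empty => simp
  | cons a t hat ih =>
    rw [Finset.sum_cons, Multiset.nodup_add]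
    refine ⟨h1 a (by simp), ih (fun b hb => h1 b (by simp [hb]))
      (fun x hx y hy hxy => h2 x (by simp [hx]) y (by simp [hy]) hxy), ?_⟩
    rw [Multiset.disjoint_left]
    intro x hx hx'
    rw [Multiset.mem_sum] at hx'
    obtain ⟨b, hb, hxb⟩ := hx'
    exact Multiset.disjoint_left.1
      (h2 a (by simp) b (by simp [hb]) (by rintro rfl; exact hat hb)) hx hxb

lemma eulerM_nodup {s : Multiset ℕ} (hs : ∀ p ∈ s, ¬ 2 ∣ p) (hpos : ∀ p ∈ s, 0 < p) :
    (eulerM s).Nodup := by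
  apply nodup_finset_sum
  · intro m hm
    rw [Multiset.coe_nodup]
    refine List.Nodup.map ?_ (Nat.bitIndices_sorted).nodup
    intro i j hij
    have hm0 : 0 < m := hpos m (Multiset.mem_toFinset.1 hm)
    exact Nat.pow_right_injective (le_refl 2) (Nat.eq_of_mul_eq_mul_right hm0 hij)
  · intro a ha b hb hab
    rw [Multiset.disjoint_left]
    rintro x hx hx'
    simp only [Multiset.mem_coe, List.mem_map] at hx hx'
    obtain ⟨i, -, rfl⟩ := hx
    obtain ⟨j, -, hj⟩ := hx'
    apply hab
    have ha' := Multiset.mem_toFinset.1 ha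
    have hb' := Multiset.mem_toFinset.1 hb
    rw [← ordCompl_two_pow_mul (hs a ha') (hpos a ha') i, ← hj,
      ordCompl_two_pow_mul (hs b hb') (hpos b hb') j]

lemma eulerM_image {s : Multiset ℕ} (hs : ∀ p ∈ s, ¬ 2 ∣ p) (hpos : ∀ p ∈ s, 0 < p) :
    (eulerM s).toFinset.image (fun p => ordCompl[2] p) = s.toFinset := by
  ext m
  simp only [Finset.mem_image, Multiset.mem_toFinset]
  constructor
  · rintro ⟨x, hx, rfl⟩
    rw [← Multiset.mem_toFinset] at hx
    rw [Multiset.mem_toFinset, mem_eulerM] at hx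
    obtain ⟨m, hm, i, hi, rfl⟩ := hx
    rw [ordCompl_two_pow_mul (hs m (Multiset.mem_toFinset.1 hm))
      (hpos m (Multiset.mem_toFinset.1 hm)) i]
    exact Multiset.mem_toFinset.1 hm
  · intro hm
    have hc : s.count m ≠ 0 := by rwa [Ne, Multiset.count_eq_zero, not_not]
    obtain ⟨i, hi⟩ := List.exists_mem_of_ne_nil _ (bitIndices_ne_nil hc)
    refine ⟨2 ^ i * m, ?_, ordCompl_two_pow_mul (hs m hm) (hpos m hm) i⟩
    rw [← Multiset.mem_toFinset] at hm ⊢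
    rw [Multiset.mem_toFinset, mem_eulerM]
    exact ⟨m, hm, i, hi, rfl⟩


lemma finset_sum_bind {β γ δ : Type*} (fs : Finset β) (g : β → Multiset γ)
    (f : γ → Multiset δ) : (∑ i ∈ fs, g i).bind f = ∑ i ∈ fs, (g i).bind f := by
  induction fs using Finset.cons_induction with
  | empty => simp
  | cons a t hat ih => rw [Finset.sum_cons, Finset.sum_cons, Multiset.add_bind, ih]

lemma bind_replicate {γ : Type*} (t : Multiset ℕ) (g : ℕ → ℕ) (a : γ) :
    (t.bind fun i => Multiset.replicate (g i) a)
      = Multiset.replicate ((t.map g).sum) a := by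
  induction t using Multiset.induction_on with
  | empty => simp
  | cons x t ih => simp [Multiset.replicate_add, ih]

lemma glaisherM_eulerM {s : Multiset ℕ} (hs : ∀ p ∈ s, ¬ 2 ∣ p) (hpos : ∀ p ∈ s, 0 < p) :
    glaisherM (eulerM s) = s := by
  rw [glaisherM, eulerM, finset_sum_bind]
  have h1 : ∀ m ∈ s.toFinset,
      ((((s.count m).bitIndices.map fun i => 2 ^ i * m : List ℕ) : Multiset ℕ).bind
        fun p => Multiset.replicate (2 ^ p.factorization 2) (ordCompl[2] p))
      = s.count m • ({m} : Multiset ℕ) := by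
    intro m hm
    rw [Multiset.mem_toFinset] at hm
    rw [← Multiset.map_coe, Multiset.bind_map]
    have h2 : ∀ i ∈ ((s.count m).bitIndices : Multiset ℕ),
        Multiset.replicate (2 ^ (2 ^ i * m).factorization 2) (ordCompl[2] (2 ^ i * m))
          = Multiset.replicate (2 ^ i) m := by
      intro i _
      rw [fact_two_pow_mul (hs m hm) (hpos m hm), Nat.mul_div_cancel_left _ (by positivity)]
    rw [Multiset.bind_congr h2, bind_replicate, Multiset.map_coe, Multiset.sum_coe,
      Nat.twoPowSum_bitIndices]
    rw [← Multiset.nsmul_singleton]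
  rw [Finset.sum_congr rfl h1, Multiset.toFinset_sum_count_nsmul_eq]


lemma count_glaisherM {t : Multiset ℕ} (ht : t.Nodup) (m : ℕ) :
    (glaisherM t).count m
      = ∑ p ∈ t.toFinset.filter (fun p => ordCompl[2] p = m), 2 ^ p.factorization 2 := by
  rw [glaisherM, Multiset.count_bind]
  have h0 : t = t.toFinset.val := by
    rw [Multiset.toFinset_val, Multiset.dedup_eq_self.2 ht]
  conv_lhs => rw [h0]
  rw [← Finset.sum_eq_multiset_sum]
  rw [Finset.sum_filter]
  refine Finset.sum_congr rfl fun p _ => ?_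
  rw [Multiset.count_replicate]

lemma mem_glaisherM {t : Multiset ℕ} (hpos : ∀ p ∈ t, 0 < p) {x : ℕ} :
    x ∈ glaisherM t ↔ ∃ p ∈ t, ordCompl[2] p = x := by
  rw [glaisherM, Multiset.mem_bind]
  constructor
  · rintro ⟨p, hp, hx⟩
    exact ⟨p, hp, (Multiset.eq_of_mem_replicate hx).symm⟩
  · rintro ⟨p, hp, rfl⟩
    exact ⟨p, hp, Multiset.mem_replicate.2 ⟨by positivity, rfl⟩⟩

lemma glaisherM_toFinset {t : Multiset ℕ} (hpos : ∀ p ∈ t, 0 < p) :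
    (glaisherM t).toFinset = t.toFinset.image (fun p => ordCompl[2] p) := by
  ext x
  simp only [Multiset.mem_toFinset, Finset.mem_image, mem_glaisherM hpos]

lemma fiber_sum (t : Finset ℕ) (c : ℕ → ℕ) :
    ∑ m ∈ t.image c, (t.filter fun p => c p = m).val = t.val := by
  refine Multiset.ext.2 fun x => ?_
  rw [Multiset.count_sum']
  by_cases hx : x ∈ t
  · rw [Finset.sum_eq_single_of_mem (c x) (Finset.mem_image_of_mem c hx)]
    · have h1 : x ∈ (t.filter fun p => c p = c x).val :=
        Finset.mem_val.mpr (Finset.mem_filter.2 ⟨hx, rfl⟩)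
      rw [Multiset.count_eq_one_of_mem (Finset.nodup _) h1,
        Multiset.count_eq_one_of_mem (Finset.nodup _) (Finset.mem_val.mpr hx)]
    · intro b _ hb
      refine Multiset.count_eq_zero_of_notMem fun hmem => hb ?_
      have := Finset.mem_filter.1 (Finset.mem_val.mp hmem)
      omega
  · rw [Multiset.count_eq_zero_of_notMem (fun h => hx (Finset.mem_val.mp h))]
    refine Finset.sum_eq_zero fun b _ => Multiset.count_eq_zero_of_notMem fun hmem => ?_
    exact hx (Finset.mem_filter.1 (Finset.mem_val.mp hmem)).1

lemma eulerM_glaisherM {t : Multiset ℕ} (ht : t.Nodup) (hpos : ∀ p ∈ t, 0 < p) :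
    eulerM (glaisherM t) = t := by
  rw [eulerM, glaisherM_toFinset hpos]
  have key : ∀ m ∈ t.toFinset.image (fun p => ordCompl[2] p),
      ((((glaisherM t).count m).bitIndices.map fun i => 2 ^ i * m : List ℕ) : Multiset ℕ)
        = (t.toFinset.filter fun p => ordCompl[2] p = m).val := by
    intro m hm
    set C := t.toFinset.filter fun p => ordCompl[2] p = m with hC
    have hinj : Set.InjOn (fun p : ℕ => p.factorization 2) (↑C : Set ℕ) := by
      intro p hp q hq hpq
      have hp' := Finset.mem_filter.1 hp
      have hq' := Finset.mem_filter.1 hq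
      have hp0 := hpos p (Multiset.mem_toFinset.1 hp'.1)
      have hq0 := hpos q (Multiset.mem_toFinset.1 hq'.1)
      rw [← self_eq_two_pow_mul hp0, ← self_eq_two_pow_mul hq0, hp'.2, hq'.2]
      simp only at hpq
      rw [hpq]
    have hcount : (glaisherM t).count m = ∑ i ∈ C.image (fun p => p.factorization 2), 2 ^ i := by
      rw [count_glaisherM ht m, Finset.sum_image hinj]
    have hbit : ((glaisherM t).count m).bitIndices
        = (C.image (fun p => p.factorization 2)).sort (· ≤ ·) := by
      rw [hcount]
      have := Nat.bitIndices_twoPowsum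
        (L := (C.image (fun p => p.factorization 2)).sort (· ≤ ·)) (Finset.sortedLT_sort _)
      rw [← this]
      congr 1
      rw [← Multiset.sum_coe, ← Multiset.map_coe, Finset.sort_eq, ← Finset.sum_eq_multiset_sum]
    rw [hbit, ← Multiset.map_coe, Finset.sort_eq, Finset.image_val_of_injOn hinj,
      Multiset.map_map]
    have hmapid : Multiset.map ((fun i => 2 ^ i * m) ∘ fun p : ℕ => p.factorization 2) C.val
        = Multiset.map id C.val := by
      refine Multiset.map_congr rfl fun p hp => ?_
      have hp' := Finset.mem_filter.1 (Finset.mem_val.mp hp)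
      have hp0 := hpos p (Multiset.mem_toFinset.1 hp'.1)
      simp only [Function.comp_apply, id_eq]
      rw [← hp'.2, self_eq_two_pow_mul hp0]
    rw [hmapid, Multiset.map_id]
  rw [Finset.sum_congr rfl key, fiber_sum]
  rw [Multiset.toFinset_val, Multiset.dedup_eq_self.2 ht]


lemma filter_min_card (T : Finset ℕ) (c : ℕ → ℕ) :
    (T.filter fun p => ∃ q ∈ T, c q = c p ∧ q < p).card + (T.image c).card = T.card := by
  have hM : (T.filter fun p => ¬ ∃ q ∈ T, c q = c p ∧ q < p).image c = T.image c := by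
    apply Finset.Subset.antisymm
    · exact Finset.image_subset_image (Finset.filter_subset _ _)
    · intro m hm
      rw [Finset.mem_image] at hm
      obtain ⟨p, hp, rfl⟩ := hm
      have hne : (T.filter fun q => c q = c p).Nonempty := ⟨p, Finset.mem_filter.2 ⟨hp, rfl⟩⟩
      have hp0mem := Finset.mem_filter.1 ((T.filter fun q => c q = c p).min'_mem hne)
      refine Finset.mem_image.2 ⟨(T.filter fun q => c q = c p).min' hne,
        Finset.mem_filter.2 ⟨hp0mem.1, ?_⟩, hp0mem.2⟩
      rintro ⟨q, hq, hcq, hlt⟩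
      have : (T.filter fun q => c q = c p).min' hne ≤ q :=
        Finset.min'_le _ q (Finset.mem_filter.2 ⟨hq, by rw [hcq, hp0mem.2]⟩)
      omega
  have hinj : Set.InjOn c (↑(T.filter fun p => ¬ ∃ q ∈ T, c q = c p ∧ q < p) : Set ℕ) := by
    intro p hp q hq hpq
    rw [Finset.mem_coe, Finset.mem_filter] at hp hq
    rcases lt_trichotomy p q with h | h | h
    · exact absurd ⟨p, hp.1, hpq, h⟩ hq.2
    · exact h
    · exact absurd ⟨q, hq.1, hpq.symm, h⟩ hp.2
  rw [← hM, Finset.card_image_of_injOn hinj]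
  exact Finset.card_filter_add_card_filter_not _

def F {n : ℕ} (P : n.Partition) : n.Partition where
  parts := eulerM P.parts
  parts_pos := by
    intro i hi
    rw [mem_eulerM] at hi
    obtain ⟨m, hm, j, hj, rfl⟩ := hi
    have := P.parts_pos (Multiset.mem_toFinset.1 hm)
    positivity
  parts_sum := by rw [eulerM_sum, P.parts_sum]

def G {n : ℕ} (P : n.Partition) : n.Partition where
  parts := glaisherM P.parts
  parts_pos := by
    intro i hi
    rw [mem_glaisherM (fun p hp => P.parts_pos hp)] at hi
    obtain ⟨p, hp, rfl⟩ := hi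
    exact ordCompl_pos (P.parts_pos hp)
  parts_sum := by rw [glaisherM_sum (fun p hp => P.parts_pos hp), P.parts_sum]

lemma odds_not_dvd {n : ℕ} {Q : n.Partition} (hQ : Q ∈ Nat.Partition.odds n) :
    ∀ p ∈ Q.parts, ¬ 2 ∣ p := by
  intro p hp hdvd
  exact (Finset.mem_filter.1 hQ).2 p hp (even_iff_two_dvd.2 hdvd)

lemma distincts_nodup {n : ℕ} {P : n.Partition} (hP : P ∈ Nat.Partition.distincts n) :
    P.parts.Nodup := (Finset.mem_filter.1 hP).2

lemma sum_odds_eq (n : ℕ) :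
    ∑ Q ∈ Nat.Partition.odds n, ((Q.parts.toFinset.card : ℤ))
      = ∑ P ∈ Nat.Partition.distincts n,
          (((P.parts.toFinset.image fun p => ordCompl[2] p).card : ℤ)) := by
  refine Finset.sum_nbij' F G ?_ ?_ ?_ ?_ ?_
  · intro Q hQ
    refine Finset.mem_filter.2 ⟨Finset.mem_univ _, ?_⟩
    exact eulerM_nodup (odds_not_dvd hQ) (fun p hp => Q.parts_pos hp)
  · intro P hP
    refine Finset.mem_filter.2 ⟨Finset.mem_univ _, ?_⟩
    intro p hp hev
    change p ∈ glaisherM P.parts at hp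
    rw [mem_glaisherM (fun q hq => P.parts_pos hq)] at hp
    obtain ⟨q, hq, rfl⟩ := hp
    exact ordCompl_odd (P.parts_pos hq) (even_iff_two_dvd.1 hev)
  · intro Q hQ
    apply Nat.Partition.ext
    exact glaisherM_eulerM (odds_not_dvd hQ) (fun p hp => Q.parts_pos hp)
  · intro P hP
    apply Nat.Partition.ext
    exact eulerM_glaisherM (distincts_nodup hP) (fun p hp => P.parts_pos hp)
  · intro Q hQ
    have := eulerM_image (odds_not_dvd hQ) (fun p hp => Q.parts_pos hp)
    show ((Q.parts.toFinset.card : ℤ)) = (((eulerM Q.parts).toFinset.image fun p => ordCompl[2] p).card : ℤ)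
    rw [this]

end B1

open Finset

theorem b1_eq_overpartitions (n : ℕ) (hn : 0 < n) :
    (∑ P ∈ Nat.Partition.distincts n, (Multiset.card P.parts : ℤ)) -
        (∑ P ∈ Nat.Partition.odds n, (P.parts.toFinset.card : ℤ)) =
      ∑ P ∈ Nat.Partition.distincts n,
        ((P.parts.toFinset.filter (fun p =>
          ∃ q ∈ P.parts.toFinset, ordCompl[2] q = ordCompl[2] p ∧ q < p)).card : ℤ) := by
  rw [B1.sum_odds_eq n, ← Finset.sum_sub_distrib]
  refine Finset.sum_congr rfl fun P hP => ?_
  have hkey := B1.filter_min_card P.parts.toFinset (fun p => ordCompl[2] p)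
  have hcard : P.parts.toFinset.card = Multiset.card P.parts :=
    Multiset.toFinset_card_of_nodup (B1.distincts_nodup hP)
  have : ((P.parts.toFinset.filter (fun p =>
      ∃ q ∈ P.parts.toFinset, ordCompl[2] q = ordCompl[2] p ∧ q < p)).card : ℤ)
      + ((P.parts.toFinset.image fun p => ordCompl[2] p).card : ℤ)
      = (Multiset.card P.parts : ℤ) := by
    rw [← hcard]
    exact_mod_cast congrArg (Nat.cast : ℕ → ℤ) hkey
  linarith
end

section
/- For every positive integer n, the number of partitions of n into distinct parts except that exactly one part value appears exactly three times equals the number of partitions λ of n such that: λ has exactly one even part value 2^k·m (k ≥ 1, m odd) which appears with odd multiplicity, and the odd number m appears in λ with multiplicity between 1 and 2^k − 1 inclusive. -/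
open Finset
open scoped Classical

namespace C1A1

/-- the set of binary digits of a natural number -/
def B (n : ℕ) : Finset ℕ := n.bitIndices.toFinset

lemma B_sum (n : ℕ) : ∑ i ∈ B n, 2 ^ i = n := Finset.twoPowSum_toFinset_bitIndices n

lemma B_of_sum (s : Finset ℕ) : B (∑ i ∈ s, 2 ^ i) = s := Finset.toFinset_bitIndices_twoPowSum s

lemma sum_pow_lt {s : Finset ℕ} {c : ℕ} (h : ∀ i ∈ s, i < c) : ∑ i ∈ s, 2 ^ i < 2 ^ c := by
  calc ∑ i ∈ s, 2 ^ i ≤ ∑ i ∈ Finset.range c, 2 ^ i := by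
        apply Finset.sum_le_sum_of_subset
        intro i hi; exact Finset.mem_range.2 (h i hi)
    _ < 2 ^ c := by
        rw [Nat.geomSum_eq le_rfl]
        have : 0 < 2 ^ c := Nat.pow_pos (by norm_num)
        omega

lemma sum_pow_mod (s : Finset ℕ) (c : ℕ) :
    (∑ i ∈ s, 2 ^ i) % 2 ^ c = ∑ i ∈ s.filter (· < c), 2 ^ i := by
  rw [← Finset.sum_filter_add_sum_filter_not s (· < c)]
  have h2 : ∀ i ∈ s.filter (fun i => ¬ i < c), 2 ^ i = 2 ^ c * 2 ^ (i - c) := by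
    intro i hi
    have : c ≤ i := by simpa using (Finset.mem_filter.1 hi).2
    rw [← pow_add]; congr 1; omega
  rw [Finset.sum_congr rfl h2, ← Finset.mul_sum, Nat.add_mul_mod_self_left,
    Nat.mod_eq_of_lt (sum_pow_lt (by intro i hi; simpa using (Finset.mem_filter.1 hi).2))]

lemma sum_pow_div (s : Finset ℕ) (c : ℕ) :
    (∑ i ∈ s, 2 ^ i) / 2 ^ c = ∑ i ∈ s.filter (c ≤ ·), 2 ^ (i - c) := by
  rw [← Finset.sum_filter_add_sum_filter_not s (c ≤ ·)]
  have h2 : ∀ i ∈ s.filter (fun i => c ≤ i), 2 ^ i = 2 ^ c * 2 ^ (i - c) := by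
    intro i hi
    have : c ≤ i := by simpa using (Finset.mem_filter.1 hi).2
    rw [← pow_add]; congr 1; omega
  rw [Finset.sum_congr rfl h2, ← Finset.mul_sum, add_comm,
    Nat.add_mul_div_left _ _ (show 0 < 2 ^ c from Nat.pow_pos (by norm_num)),
    Nat.div_eq_of_lt (sum_pow_lt (by intro i hi; simp at hi; omega)), zero_add]

lemma mem_iff_odd_sum (s : Finset ℕ) (i : ℕ) :
    i ∈ s ↔ Odd ((∑ j ∈ s, 2 ^ j) / 2 ^ i) := by
  rw [sum_pow_div]
  constructor
  · intro hi
    rw [← Finset.sum_erase_add _ _ (Finset.mem_filter.2 ⟨hi, le_refl i⟩)]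
    have he : 2 ∣ ∑ x ∈ (s.filter (i ≤ ·)).erase i, 2 ^ (x - i) := by
      apply Finset.dvd_sum
      intro x hx
      have h1 := Finset.mem_filter.1 (Finset.mem_of_mem_erase hx)
      have h2 : x ≠ i := Finset.ne_of_mem_erase hx
      have h3 : i ≤ x := h1.2
      exact dvd_pow_self 2 (by omega)
    rcases he with ⟨t, ht⟩
    rw [ht, Nat.sub_self, pow_zero]
    exact ⟨t, by ring⟩
  · intro hodd
    by_contra hi
    have he : 2 ∣ ∑ x ∈ s.filter (i ≤ ·), 2 ^ (x - i) := by
      apply Finset.dvd_sum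
      intro x hx
      rcases Finset.mem_filter.1 hx with ⟨hxB, hxi⟩
      have : x ≠ i := fun h => hi (h ▸ hxB)
      exact dvd_pow_self 2 (by omega)
    rw [Nat.odd_iff] at hodd
    omega

lemma mem_B_iff_odd {n i : ℕ} : i ∈ B n ↔ Odd (n / 2 ^ i) := by
  have := mem_iff_odd_sum (B n) i
  rwa [B_sum] at this

lemma mem_iff_mod_sum (s : Finset ℕ) (i : ℕ) :
    i ∈ s ↔ 2 ^ i ≤ (∑ j ∈ s, 2 ^ j) % 2 ^ (i + 1) := by
  rw [sum_pow_mod]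
  constructor
  · intro hi
    exact Finset.single_le_sum (f := fun j => 2 ^ j) (by intro j _; positivity)
      (Finset.mem_filter.2 ⟨hi, by omega⟩)
  · intro h
    by_contra hi
    have : ∑ j ∈ s.filter (· < i + 1), 2 ^ j < 2 ^ i := by
      apply sum_pow_lt
      intro j hj
      rcases Finset.mem_filter.1 hj with ⟨hjB, hji⟩
      have : j ≠ i := fun h => hi (h ▸ hjB)
      omega
    omega

lemma mem_B_iff_mod {n i : ℕ} : i ∈ B n ↔ 2 ^ i ≤ n % 2 ^ (i + 1) := by
  have := mem_iff_mod_sum (B n) i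
  rwa [B_sum] at this


/-! ### 2-adic valuation helpers -/

/-- 2-adic valuation -/
def nu (n : ℕ) : ℕ := n.factorization 2

/-- odd part -/
def om (n : ℕ) : ℕ := ordCompl[2] n

lemma nu_om (n : ℕ) : 2 ^ nu n * om n = n := Nat.ordProj_mul_ordCompl_eq_self n 2

lemma om_odd {n : ℕ} (hn : n ≠ 0) : Odd (om n) := by
  have := Nat.not_dvd_ordCompl Nat.prime_two hn
  show Odd (n / 2 ^ n.factorization 2)
  rw [Nat.odd_iff]
  omega

lemma om_pos {n : ℕ} (hn : n ≠ 0) : 0 < om n := Nat.ordCompl_pos 2 hn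

lemma nu_two_pow_mul {k m : ℕ} (hm : Odd m) : nu (2 ^ k * m) = k := by
  have hm0 : m ≠ 0 := by rintro rfl; simp [Nat.odd_iff] at hm
  unfold nu
  rw [Nat.factorization_mul (by positivity) hm0]
  have h2 : ¬ 2 ∣ m := by rw [Nat.odd_iff] at hm; omega
  simp [Nat.Prime.factorization_pow, Nat.factorization_eq_zero_of_not_dvd h2,
    Nat.Prime.factorization Nat.prime_two]

lemma om_two_pow_mul {k m : ℕ} (hm : Odd m) : om (2 ^ k * m) = m := by
  have h1 : 2 ^ k * m ≠ 0 := by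
    have hm0 : m ≠ 0 := by rintro rfl; simp [Nat.odd_iff] at hm
    positivity
  have := nu_om (2 ^ k * m)
  rw [nu_two_pow_mul hm] at this
  have h2 : 0 < 2 ^ k := by positivity
  exact Nat.eq_of_mul_eq_mul_left h2 this

lemma two_pow_mul_inj {k k' m m' : ℕ} (hm : Odd m) (hm' : Odd m')
    (h : 2 ^ k * m = 2 ^ k' * m') : k = k' ∧ m = m' := by
  have h1 : k = k' := by
    have h2 := congrArg nu h
    rwa [nu_two_pow_mul hm, nu_two_pow_mul hm'] at h2
  refine ⟨h1, ?_⟩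
  subst h1
  exact Nat.eq_of_mul_eq_mul_left (by positivity) h

/-! ### Good pairs -/

/-- `Good N j k` : `j < k` are both binary digits of `N` with no digits strictly between. -/
def Good (N j k : ℕ) : Prop :=
  j < k ∧ j ∈ B N ∧ k ∈ B N ∧ ∀ i, j < i → i < k → i ∉ B N

lemma good_unique_up {N j k k' : ℕ} (h : Good N j k) (h' : Good N j k') : k = k' := by
  by_contra hne
  rcases Nat.lt_or_ge k k' with hlt | hge
  · exact h'.2.2.2 k h.1 hlt h.2.2.1
  · exact h.2.2.2 k' h'.1 (by omega) h'.2.2.1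

lemma good_unique_down {N j j' k : ℕ} (h : Good N j k) (h' : Good N j' k) : j = j' := by
  by_contra hne
  rcases Nat.lt_or_ge j j' with hlt | hge
  · exact h.2.2.2 j' hlt h'.1 h'.2.1
  · exact h'.2.2.2 j (by omega) h.1 h.2.1

lemma two_pow_le_of_mem_B {N i : ℕ} (h : i ∈ B N) : 2 ^ i ≤ N := by
  conv_rhs => rw [← B_sum N]
  exact Finset.single_le_sum (f := fun j => 2 ^ j) (by intro j _; positivity) h

lemma good_three_le {N j k : ℕ} (h : Good N j k) : 3 * 2 ^ j ≤ N := by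
  rcases h with ⟨hjk, hj, hk, -⟩
  have hsub : ({j, k} : Finset ℕ) ⊆ B N := by
    intro x hx; rcases Finset.mem_insert.1 hx with rfl | hx
    · exact hj
    · rw [Finset.mem_singleton.1 hx]; exact hk
  have := Finset.sum_le_sum_of_subset (f := fun i => 2 ^ i) hsub
  rw [B_sum, Finset.sum_insert (by simp; omega), Finset.sum_singleton] at this
  have h2 : 2 ^ (j + 1) ≤ 2 ^ k := Nat.pow_le_pow_right (by norm_num) (by omega)
  have h3 : 2 ^ (j+1) = 2 * 2 ^ j := by ring
  omega

lemma good_mod_bounds {N j k : ℕ} (h : Good N j k) :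
    2 ^ j ≤ N % 2 ^ k ∧ N % 2 ^ k ≤ 2 ^ k - 1 := by
  constructor
  · have h1 : 2 ^ j ≤ N % 2 ^ (j + 1) := mem_B_iff_mod.1 h.2.1
    have h2 : (N % 2 ^ k) % 2 ^ (j + 1) = N % 2 ^ (j + 1) :=
      Nat.mod_mod_of_dvd N (pow_dvd_pow 2 (by have h0 := h.1; omega))
    have h3 : (N % 2 ^ k) % 2 ^ (j + 1) ≤ N % 2 ^ k := Nat.mod_le _ _
    rw [h2] at h3
    exact le_trans h1 h3
  · have : N % 2 ^ k < 2 ^ k := Nat.mod_lt _ (by positivity)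
    omega

lemma good_div_odd {N j k : ℕ} (h : Good N j k) : Odd (N / 2 ^ k) := mem_B_iff_odd.1 h.2.2.1

/-- c1-side construction of `k` : the next binary digit above `j`. -/
lemma good_of_mem_lower {N j : ℕ} (hj : j ∈ B N) (hN : 2 ^ (j + 1) ≤ N) :
    Good N j (j + 1 + nu (N / 2 ^ (j + 1))) := by
  set T := N / 2 ^ (j + 1) with hT
  have hT0 : T ≠ 0 := by
    have := Nat.div_le_div_right (c := 2 ^ (j+1)) hN
    rw [Nat.div_self (by positivity)] at this
    omega
  set k := j + 1 + nu T with hk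
  have hdiv : ∀ s, N / 2 ^ (j + 1 + s) = T / 2 ^ s := by
    intro s
    rw [pow_add, ← Nat.div_div_eq_div_mul, hT]
  have hNk : N / 2 ^ k = ordCompl[2] T := by rw [hk, hdiv]; rfl
  have hodd : Odd (N / 2 ^ k) := by rw [hNk]; exact om_odd hT0
  refine ⟨by omega, hj, mem_B_iff_odd.2 hodd, ?_⟩
  intro i hji hik
  rw [mem_B_iff_odd]
  intro hoddi
  rcases Nat.exists_eq_add_of_lt hji with ⟨s, rfl⟩
  have hsnu : s + 1 ≤ T.factorization 2 := by
    have h5 : j + s + 1 < j + 1 + nu T := hik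
    unfold nu at h5
    omega
  rw [show j + s + 1 = j + 1 + s by omega, hdiv] at hoddi
  have hdvd : 2 ^ (s + 1) ∣ T := dvd_trans (pow_dvd_pow 2 hsnu) (Nat.ordProj_dvd T 2)
  rcases hdvd with ⟨u, hu⟩
  have h6 : T / 2 ^ s = 2 * u := by
    rw [hu, show (2:ℕ) ^ (s+1) * u = 2 ^ s * (2 * u) by ring]
    exact Nat.mul_div_cancel_left _ (by positivity)
  rw [h6] at hoddi
  exact (Nat.not_odd_iff_even.2 ⟨u, by ring⟩) hoddi

/-- a1-side construction of `j` : the largest binary digit below `k`. -/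
lemma good_of_mem_upper {N k : ℕ} (hk : k ∈ B N) (hr : 1 ≤ N % 2 ^ k) :
    Good N (Nat.findGreatest (· ∈ B N) (k - 1)) k := by
  have hex : ∃ i, i < k ∧ i ∈ B N := by
    by_contra hc
    push_neg at hc
    have : N % 2 ^ k = 0 := by
      conv_lhs => rw [← B_sum N]
      rw [sum_pow_mod]
      apply Finset.sum_eq_zero
      intro x hx
      rcases Finset.mem_filter.1 hx with ⟨hxB, hxk⟩
      exact absurd hxB (hc x (by omega))
    omega
  rcases hex with ⟨i0, hi0k, hi0⟩
  have hk1 : k ≠ 0 := by omega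
  have hspec : Nat.findGreatest (· ∈ B N) (k - 1) ∈ B N :=
    Nat.findGreatest_spec (m := i0) (by omega) hi0
  have hle : Nat.findGreatest (· ∈ B N) (k - 1) ≤ k - 1 := Nat.findGreatest_le _
  refine ⟨by omega, hspec, hk, ?_⟩
  intro i hji hik
  exact Nat.findGreatest_is_greatest hji (by omega)


/-! ### Partition-level definitions -/

variable {n : ℕ}

def predC (P : n.Partition) : Prop :=
  ∃ p ∈ P.parts.toFinset, P.parts.count p = 3 ∧
    ∀ q ∈ P.parts.toFinset, q ≠ p → P.parts.count q = 1

def predA (P : n.Partition) : Prop :=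
  ∃ k m : ℕ, 1 ≤ k ∧ Odd m ∧
    P.parts.toFinset.filter (fun p => Even p) = {2 ^ k * m} ∧
    Odd (P.parts.count (2 ^ k * m)) ∧
    1 ≤ P.parts.count m ∧ P.parts.count m ≤ 2 ^ k - 1

/-- the triple part of a `predC` partition -/
def aP (P : n.Partition) : ℕ :=
  (P.parts.toFinset.filter (fun q => P.parts.count q = 3)).sup id

def mP (P : n.Partition) : ℕ := om (aP P)
def jP (P : n.Partition) : ℕ := nu (aP P)

/-- total 2-power weight of the class of the odd number `v` -/
def Nv (P : n.Partition) (v : ℕ) : ℕ :=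
  ((P.parts.filter (fun p => om p = v)).map (fun p => 2 ^ nu p)).sum

def NP (P : n.Partition) : ℕ := Nv P (mP P)

def kP (P : n.Partition) : ℕ := jP P + 1 + nu (NP P / 2 ^ (jP P + 1))

lemma parts_ne_zero (P : n.Partition) {p : ℕ} (hp : p ∈ P.parts) : p ≠ 0 := by
  intro h
  have := P.parts_pos hp
  omega

lemma aP_spec {P : n.Partition} (hP : predC P) :
    aP P ∈ P.parts.toFinset ∧ P.parts.count (aP P) = 3 ∧
      ∀ q ∈ P.parts.toFinset, q ≠ aP P → P.parts.count q = 1 := by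
  rcases hP with ⟨p, hp, hp3, hp1⟩
  have ha : aP P = p := by
    have : (P.parts.toFinset.filter (fun q => P.parts.count q = 3)) = {p} := by
      apply Finset.ext
      intro q
      simp only [Finset.mem_filter, Finset.mem_singleton]
      constructor
      · rintro ⟨hq1, hq2⟩
        by_contra hne
        rw [hp1 q hq1 hne] at hq2
        omega
      · rintro rfl; exact ⟨hp, hp3⟩
    rw [aP, this, Finset.sup_singleton, id]
  rw [ha]; exact ⟨hp, hp3, hp1⟩

lemma aP_mem {P : n.Partition} (hP : predC P) : aP P ∈ P.parts :=
  Multiset.mem_toFinset.1 (aP_spec hP).1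

lemma aP_ne_zero {P : n.Partition} (hP : predC P) : aP P ≠ 0 :=
  parts_ne_zero P (aP_mem hP)

lemma mP_odd {P : n.Partition} (hP : predC P) : Odd (mP P) := om_odd (aP_ne_zero hP)

lemma aP_eq {P : n.Partition} (hP : predC P) : aP P = 2 ^ jP P * mP P := (nu_om (aP P)).symm

lemma Nv_eq_finset_sum (P : n.Partition) (v : ℕ) :
    Nv P v = ∑ p ∈ P.parts.toFinset.filter (fun p => om p = v), P.parts.count p * 2 ^ nu p := by
  unfold Nv
  rw [Finset.sum_multiset_map_count, Multiset.toFinset_filter]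
  apply Finset.sum_congr rfl
  intro p hp
  rcases Finset.mem_filter.1 hp with ⟨hp1, hp2⟩
  rw [Multiset.count_filter_of_pos (by simpa using hp2)]
  simp

/-- the class of `v ≠ mP` inside a `predC` partition, as a finset of exponents -/
def Iv (P : n.Partition) (v : ℕ) : Finset ℕ :=
  (P.parts.toFinset.filter (fun p => om p = v)).image nu

lemma nu_injOn_class (P : n.Partition) (v : ℕ) :
    ∀ p ∈ P.parts.toFinset.filter (fun p => om p = v),
      ∀ q ∈ P.parts.toFinset.filter (fun p => om p = v), nu p = nu q → p = q := by
  intro p hp q hq hpq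
  rcases Finset.mem_filter.1 hp with ⟨hp1, hp2⟩
  rcases Finset.mem_filter.1 hq with ⟨hq1, hq2⟩
  have h1 := nu_om p
  have h2 := nu_om q
  rw [hp2] at h1
  rw [hq2] at h2
  rw [← h1, ← h2, hpq]

/-- for `v ≠ mP`, `Nv` is the sum of distinct powers indexed by `Iv` -/
lemma Nv_eq_sum_Iv {P : n.Partition} (hP : predC P) {v : ℕ} (hv : v ≠ mP P) :
    Nv P v = ∑ i ∈ Iv P v, 2 ^ i := by
  rw [Nv_eq_finset_sum, Iv, Finset.sum_image (nu_injOn_class P v)]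
  apply Finset.sum_congr rfl
  intro p hp
  rcases Finset.mem_filter.1 hp with ⟨hp1, hp2⟩
  have hcnt : P.parts.count p = 1 := by
    apply (aP_spec hP).2.2 p hp1
    intro hpa
    exact hv (by rw [← hp2, hpa]; rfl)
  rw [hcnt, one_mul]

lemma B_Nv {P : n.Partition} (hP : predC P) {v : ℕ} (hv : v ≠ mP P) :
    B (Nv P v) = Iv P v := by
  rw [Nv_eq_sum_Iv hP hv, B_of_sum]

/-- exponent set for the class of `mP` with the triple removed -/
def Im (P : n.Partition) : Finset ℕ :=
  ((P.parts.toFinset.filter (fun p => om p = mP P)).erase (aP P)).image nu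

lemma jP_not_mem_Im {P : n.Partition} (hP : predC P) : jP P ∉ Im P := by
  intro hj
  rcases Finset.mem_image.1 hj with ⟨p, hp, hpj⟩
  have hpe := Finset.mem_of_mem_erase hp
  have hpa : p ≠ aP P := Finset.ne_of_mem_erase hp
  rcases Finset.mem_filter.1 hpe with ⟨hp1, hp2⟩
  apply hpa
  have h1 := nu_om p
  rw [hp2, hpj] at h1
  rw [← h1, ← aP_eq hP]

lemma NP_eq {P : n.Partition} (hP : predC P) :
    NP P = 3 * 2 ^ jP P + ∑ i ∈ Im P, 2 ^ i := by
  have hamem : aP P ∈ P.parts.toFinset.filter (fun p => om p = mP P) :=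
    Finset.mem_filter.2 ⟨(aP_spec hP).1, rfl⟩
  rw [NP, Nv_eq_finset_sum, ← Finset.add_sum_erase _ _ hamem, (aP_spec hP).2.1]
  rw [Im, Finset.sum_image (fun p hp q hq h =>
    nu_injOn_class P (mP P) p (Finset.mem_of_mem_erase hp) q (Finset.mem_of_mem_erase hq) h)]
  congr 1
  apply Finset.sum_congr rfl
  intro p hp
  have hpa : p ≠ aP P := Finset.ne_of_mem_erase hp
  have hp1 := (Finset.mem_filter.1 (Finset.mem_of_mem_erase hp)).1
  rw [(aP_spec hP).2.2 p hp1 hpa, one_mul]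

lemma good_P {P : n.Partition} (hP : predC P) : Good (NP P) (jP P) (kP P) := by
  have hNP := NP_eq hP
  have h3 : (2:ℕ) ^ (jP P + 1) = 2 * 2 ^ jP P := by ring
  have hs' : (∑ i ∈ Im P, 2 ^ i) % 2 ^ (jP P + 1) < 2 ^ jP P := by
    rw [sum_pow_mod]
    apply sum_pow_lt
    intro i hi
    rcases Finset.mem_filter.1 hi with ⟨hi1, hi2⟩
    have : i ≠ jP P := fun h => jP_not_mem_Im hP (h ▸ hi1)
    omega
  have hmem : jP P ∈ B (NP P) := by
    rw [mem_B_iff_mod]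
    have h1 : NP P = 2 ^ (jP P + 1) + (2 ^ jP P + ∑ i ∈ Im P, 2 ^ i) := by omega
    have h2 : 2 ^ jP P + (∑ i ∈ Im P, 2 ^ i) % 2 ^ (jP P + 1) < 2 ^ (jP P + 1) := by omega
    rw [h1, Nat.add_mod_left, Nat.add_mod,
      Nat.mod_eq_of_lt (show (2:ℕ) ^ jP P < 2 ^ (jP P + 1) by omega),
      Nat.mod_eq_of_lt h2]
    omega
  exact good_of_mem_lower hmem (by omega)


/-! ### The map Φ -/

lemma sum_map_ite (s : Multiset ℕ) (p : ℕ → Prop) [DecidablePred p] (f : ℕ → ℕ) :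
    (s.map (fun x => if p x then f x else 0)).sum = ((s.filter p).map f).sum := by
  induction s using Multiset.induction_on with
  | empty => simp
  | cons a t ih =>
    by_cases h : p a <;> simp [h, ih]

def phiParts (P : n.Partition) : Multiset ℕ :=
  ((P.parts.filter (fun p => om p ≠ mP P)).bind fun p => Multiset.replicate (2 ^ nu p) (om p))
    + Multiset.replicate (NP P % 2 ^ kP P) (mP P)
    + Multiset.replicate (NP P / 2 ^ kP P) (2 ^ kP P * mP P)

lemma kP_pos (P : n.Partition) : 1 ≤ kP P := by unfold kP; omega

lemma e_even (P : n.Partition) : Even (2 ^ kP P * mP P) := by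
  have h1 : Even ((2:ℕ) ^ kP P) := by
    have := kP_pos P
    exact (Nat.even_pow' (by omega)).2 even_two
  exact h1.mul_right _

lemma m_ne_e {P : n.Partition} (hP : predC P) : mP P ≠ 2 ^ kP P * mP P := by
  intro h
  have h1 := e_even P
  rw [← h] at h1
  exact (Nat.not_odd_iff_even.2 h1) (mP_odd hP)

lemma count_phi_bind (P : n.Partition) (q : ℕ) :
    (((P.parts.filter (fun p => om p ≠ mP P)).bind
        fun p => Multiset.replicate (2 ^ nu p) (om p)).count q)
      = ((P.parts.filter (fun p => om p = q ∧ om p ≠ mP P)).map (fun p => 2 ^ nu p)).sum := by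
  rw [Multiset.count_bind]
  simp only [Multiset.count_replicate]
  rw [sum_map_ite, Multiset.filter_filter]

lemma count_phi_oddne {P : n.Partition} (hP : predC P) {q : ℕ} (hodd : Odd q)
    (hq : q ≠ mP P) : (phiParts P).count q = Nv P q := by
  unfold phiParts
  rw [Multiset.count_add, Multiset.count_add, Multiset.count_replicate,
    Multiset.count_replicate, count_phi_bind]
  have h1 : ¬ (2 ^ kP P * mP P = q) := by
    intro h
    exact (Nat.not_odd_iff_even.2 (h ▸ e_even P)) hodd
  have h2 : ¬ (mP P = q) := fun h => hq h.symm
  rw [if_neg h1, if_neg h2]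
  have h4 : P.parts.filter (fun p => om p = q ∧ om p ≠ mP P)
      = P.parts.filter (fun p => om p = q) := by
    apply Multiset.filter_congr
    intro x hx
    constructor
    · rintro ⟨h, -⟩; exact h
    · intro h; exact ⟨h, fun hc => hq (by rw [← h, hc])⟩
  rw [h4]
  simp [Nv]

lemma count_phi_m {P : n.Partition} (hP : predC P) :
    (phiParts P).count (mP P) = NP P % 2 ^ kP P := by
  unfold phiParts
  rw [Multiset.count_add, Multiset.count_add, Multiset.count_replicate,
    Multiset.count_replicate, count_phi_bind]
  rw [if_pos rfl, if_neg (Ne.symm (m_ne_e hP))]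
  have h0 : (P.parts.filter (fun p => om p = mP P ∧ om p ≠ mP P)) = 0 := by
    rw [Multiset.filter_eq_nil]
    rintro x hx ⟨h1, h2⟩
    exact h2 h1
  rw [h0]
  simp

lemma count_phi_even {P : n.Partition} (hP : predC P) {q : ℕ} (heven : Even q) :
    (phiParts P).count q = if q = 2 ^ kP P * mP P then NP P / 2 ^ kP P else 0 := by
  unfold phiParts
  rw [Multiset.count_add, Multiset.count_add, Multiset.count_replicate,
    Multiset.count_replicate, count_phi_bind]
  have h2 : ¬ (q = mP P) := by
    intro h
    exact (Nat.not_odd_iff_even.2 heven) (h ▸ mP_odd hP)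
  have h0 : (P.parts.filter (fun p => om p = q ∧ om p ≠ mP P)) = 0 := by
    rw [Multiset.filter_eq_nil]
    rintro x hx ⟨hqx, h1⟩
    exact (Nat.not_odd_iff_even.2 heven) (hqx ▸ om_odd (parts_ne_zero P hx))
  rw [h0, if_neg (fun h => h2 h.symm)]
  by_cases hq : q = 2 ^ kP P * mP P
  · rw [if_pos hq.symm, if_pos hq]
    simp
  · rw [if_neg (fun h => hq h.symm), if_neg hq]
    simp

lemma phiParts_sum {P : n.Partition} (hP : predC P) : (phiParts P).sum = n := by
  unfold phiParts
  rw [Multiset.sum_add, Multiset.sum_add, Multiset.sum_bind, Multiset.sum_replicate,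
    Multiset.sum_replicate]
  have h1 : ((P.parts.filter (fun p => om p ≠ mP P)).map
      (fun p => (Multiset.replicate (2 ^ nu p) (om p)).sum)).sum
      = (P.parts.filter (fun p => om p ≠ mP P)).sum := by
    have : ∀ p ∈ P.parts.filter (fun p => om p ≠ mP P),
        (Multiset.replicate (2 ^ nu p) (om p)).sum = p := by
      intro p _
      rw [Multiset.sum_replicate, smul_eq_mul, nu_om]
    rw [Multiset.map_congr rfl this, Multiset.map_id']
  have h2 : (NP P % 2 ^ kP P) • mP P + (NP P / 2 ^ kP P) • (2 ^ kP P * mP P)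
      = NP P * mP P := by
    have h := Nat.mod_add_div (NP P) (2 ^ kP P)
    simp only [smul_eq_mul]
    calc (NP P % 2 ^ kP P) * mP P + (NP P / 2 ^ kP P) * (2 ^ kP P * mP P)
        = (NP P % 2 ^ kP P + 2 ^ kP P * (NP P / 2 ^ kP P)) * mP P := by ring
      _ = NP P * mP P := by rw [h]
  have h3 : NP P * mP P = (P.parts.filter (fun p => om p = mP P)).sum := by
    unfold NP Nv
    rw [← Multiset.sum_map_mul_right]
    have : ∀ p ∈ P.parts.filter (fun p => om p = mP P), 2 ^ nu p * mP P = p := by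
      intro p hp
      have h4 : om p = mP P := by
        have := Multiset.mem_filter.1 hp
        simpa using this.2
      rw [← h4, nu_om]
    rw [Multiset.map_congr rfl this, Multiset.map_id']
  have h5 := congrArg Multiset.sum (Multiset.filter_add_not (fun p => om p = mP P) P.parts)
  rw [Multiset.sum_add, P.parts_sum] at h5
  have h6 : (P.parts.filter (fun p => ¬ om p = mP P)).sum
      = (P.parts.filter (fun p => om p ≠ mP P)).sum := rfl
  rw [h1, add_assoc, h2, h3]
  omega

lemma phiParts_pos {P : n.Partition} (hP : predC P) {x : ℕ} (hx : x ∈ phiParts P) :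
    0 < x := by
  unfold phiParts at hx
  rcases Multiset.mem_add.1 hx with hx | hx
  · rcases Multiset.mem_add.1 hx with hx | hx
    · rcases Multiset.mem_bind.1 hx with ⟨p, hp, hxp⟩
      have hp' : p ∈ P.parts := Multiset.mem_of_mem_filter hp
      rw [Multiset.eq_of_mem_replicate hxp]
      exact om_pos (parts_ne_zero P hp')
    · rw [Multiset.eq_of_mem_replicate hx]
      exact om_pos (aP_ne_zero hP)
  · rw [Multiset.eq_of_mem_replicate hx]
    have := om_pos (aP_ne_zero hP)
    positivity

noncomputable def Phi (P : n.Partition) : n.Partition :=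
  if h : predC P then ⟨phiParts P, fun hx => phiParts_pos h hx, phiParts_sum h⟩ else P

lemma Phi_parts {P : n.Partition} (hP : predC P) : (Phi P).parts = phiParts P := by
  rw [Phi, dif_pos hP]

lemma NP_div_pos {P : n.Partition} (hP : predC P) : 1 ≤ NP P / 2 ^ kP P :=
  (Nat.one_le_div_iff (by positivity)).2 (two_pow_le_of_mem_B (good_P hP).2.2.1)

lemma Phi_evens {P : n.Partition} (hP : predC P) :
    (Phi P).parts.toFinset.filter (fun p => Even p) = {2 ^ kP P * mP P} := by
  apply Finset.ext
  intro q
  simp only [Finset.mem_filter, Finset.mem_singleton, Multiset.mem_toFinset]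
  constructor
  · rintro ⟨hq, hqe⟩
    rw [← Multiset.count_pos, Phi_parts hP, count_phi_even hP hqe] at hq
    by_contra hne
    rw [if_neg hne] at hq
    omega
  · rintro rfl
    refine ⟨?_, e_even P⟩
    rw [← Multiset.count_pos, Phi_parts hP, count_phi_even hP (e_even P), if_pos rfl]
    exact NP_div_pos hP

lemma predA_Phi {P : n.Partition} (hP : predC P) : predA (Phi P) := by
  have hgood := good_P hP
  have hbounds := good_mod_bounds hgood
  refine ⟨kP P, mP P, kP_pos P, mP_odd hP, Phi_evens hP, ?_, ?_, ?_⟩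
  · rw [Phi_parts hP, count_phi_even hP (e_even P), if_pos rfl]
    exact good_div_odd hgood
  · rw [Phi_parts hP, count_phi_m hP]
    have h1 : 0 < 2 ^ jP P := by positivity
    omega
  · rw [Phi_parts hP, count_phi_m hP]
    exact hbounds.2


/-! ### Reconstruction and injectivity of Φ -/

lemma Im_eq {P : n.Partition} (hP : predC P) : Im P = B (NP P - 3 * 2 ^ jP P) := by
  have h := NP_eq hP
  have h2 : NP P - 3 * 2 ^ jP P = ∑ i ∈ Im P, 2 ^ i := by omega
  rw [h2, B_of_sum]

lemma predC_count {P : n.Partition} (hP : predC P) (q : ℕ) (hq0 : q ≠ 0) :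
    P.parts.count q =
      if q = aP P then 3
      else if om q = mP P then (if nu q ∈ Im P then 1 else 0)
      else (if nu q ∈ Iv P (om q) then 1 else 0) := by
  by_cases hqa : q = aP P
  · rw [if_pos hqa, hqa, (aP_spec hP).2.1]
  rw [if_neg hqa]
  by_cases hmem : q ∈ P.parts
  · have hcnt : P.parts.count q = 1 :=
      (aP_spec hP).2.2 q (Multiset.mem_toFinset.2 hmem) hqa
    rw [hcnt]
    by_cases hom : om q = mP P
    · have hin : nu q ∈ Im P := Finset.mem_image.2 ⟨q, Finset.mem_erase.2 ⟨hqa,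
          Finset.mem_filter.2 ⟨Multiset.mem_toFinset.2 hmem, by simpa using hom⟩⟩, rfl⟩
      rw [if_pos hom, if_pos hin]
    · have hin : nu q ∈ Iv P (om q) := Finset.mem_image.2 ⟨q,
          Finset.mem_filter.2 ⟨Multiset.mem_toFinset.2 hmem, by simp⟩, rfl⟩
      rw [if_neg hom, if_pos hin]
  · rw [Multiset.count_eq_zero_of_notMem hmem]
    by_cases hom : om q = mP P
    · rw [if_pos hom, if_neg]
      intro hj
      · 
        rcases Finset.mem_image.1 hj with ⟨p, hp, hpq⟩
        have hp1 := Finset.mem_filter.1 (Finset.mem_of_mem_erase hp)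
        have hpeq : p = q := by
          have e1 := nu_om p
          have e2 := nu_om q
          have : om p = om q := by
            have := hp1.2
            rw [this, hom]  -- om p = mP P = om q
          rw [← e1, ← e2, hpq, this]
        exact hmem (hpeq ▸ Multiset.mem_toFinset.1 hp1.1)
    · rw [if_neg hom, if_neg]
      intro hj
      · 
        rcases Finset.mem_image.1 hj with ⟨p, hp, hpq⟩
        rcases Finset.mem_filter.1 hp with ⟨hp1, hp2⟩
        have hpeq : p = q := by
          have e1 := nu_om p
          have e2 := nu_om q
          have : om p = om q := by simpa using hp2
          rw [← e1, ← e2, hpq, this]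
        exact hmem (hpeq ▸ Multiset.mem_toFinset.1 hp1)

lemma Phi_inj {P1 P2 : n.Partition} (h1 : predC P1) (h2 : predC P2)
    (he : Phi P1 = Phi P2) : P1 = P2 := by
  have hev : ({2 ^ kP P1 * mP P1} : Finset ℕ) = {2 ^ kP P2 * mP P2} := by
    rw [← Phi_evens h1, ← Phi_evens h2, he]
  have hee : 2 ^ kP P1 * mP P1 = 2 ^ kP P2 * mP P2 := by
    rwa [Finset.singleton_inj] at hev
  obtain ⟨hk, hm⟩ := two_pow_mul_inj (mP_odd h1) (mP_odd h2) hee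
  have hN : NP P1 = NP P2 := by
    have d1 : NP P1 = (Phi P1).parts.count (mP P1)
        + 2 ^ kP P1 * (Phi P1).parts.count (2 ^ kP P1 * mP P1) := by
      rw [Phi_parts h1, count_phi_m h1, count_phi_even h1 (e_even P1), if_pos rfl,
        Nat.mod_add_div]
    have d2 : NP P2 = (Phi P2).parts.count (mP P2)
        + 2 ^ kP P2 * (Phi P2).parts.count (2 ^ kP P2 * mP P2) := by
      rw [Phi_parts h2, count_phi_m h2, count_phi_even h2 (e_even P2), if_pos rfl,
        Nat.mod_add_div]
    rw [d1, d2, he, hm, hk]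
  have hj : jP P1 = jP P2 := by
    have g1 := good_P h1
    have g2 := good_P h2
    rw [hN, hk] at g1
    exact good_unique_down g1 g2
  have ha : aP P1 = aP P2 := by rw [aP_eq h1, aP_eq h2, hj, hm]
  have hNv : ∀ v, v ≠ mP P1 → Nv P1 v = Nv P2 v := by
    intro v hvm
    by_cases hv : Odd v
    · rw [← count_phi_oddne h1 hv hvm, ← count_phi_oddne h2 hv (hm ▸ hvm),
        ← Phi_parts h1, ← Phi_parts h2, he]
    · -- v is even (or zero) : both classes are empty
      have : ∀ (P : n.Partition), Nv P v = 0 := by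
        intro P
        unfold Nv
        have h0 : P.parts.filter (fun p => om p = v) = 0 := by
          rw [Multiset.filter_eq_nil]
          intro x hx hxv
          exact hv (hxv ▸ om_odd (parts_ne_zero P hx))
        rw [h0]
        rfl
      rw [this, this]
  apply Nat.Partition.ext
  rw [Multiset.ext]
  intro q
  by_cases hq0 : q = 0
  · subst hq0
    rw [Multiset.count_eq_zero_of_notMem, Multiset.count_eq_zero_of_notMem]
    · intro hc; exact absurd (P2.parts_pos hc) (by omega)
    · intro hc; exact absurd (P1.parts_pos hc) (by omega)
  rw [predC_count h1 q hq0, predC_count h2 q hq0, ha, hm]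
  by_cases hqa : q = aP P2
  · simp [hqa]
  rw [if_neg hqa, if_neg hqa]
  by_cases hom : om q = mP P2
  · rw [if_pos hom, if_pos hom, Im_eq h1, Im_eq h2, hN, hj]
  · rw [if_neg hom, if_neg hom]
    have hIv : Iv P1 (om q) = Iv P2 (om q) := by
      rw [← B_Nv h1 (hm ▸ hom), ← B_Nv h2 hom, hNv (om q) (hm ▸ hom)]
    rw [hIv]


/-! ### The map Ψ -/

lemma om_odd_self {v : ℕ} (hv : Odd v) : om v = v := by
  have := om_two_pow_mul (k := 0) hv
  rwa [pow_zero, one_mul] at this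

lemma nu_odd_self {v : ℕ} (hv : Odd v) : nu v = 0 := by
  have := nu_two_pow_mul (k := 0) hv
  rwa [pow_zero, one_mul] at this

lemma not_mem_B_sub {N j k : ℕ} (h : Good N j k) : j ∉ B (N - 3 * 2 ^ j) := by
  have h3 := good_three_le h
  have hρ1 : 2 ^ j ≤ N % 2 ^ (j + 1) := mem_B_iff_mod.1 h.2.1
  have hρ2 : N % 2 ^ (j + 1) < 2 ^ (j + 1) := Nat.mod_lt _ (by positivity)
  have hpow : (2:ℕ) ^ (j + 1) = 2 * 2 ^ j := by ring
  have hd := Nat.div_add_mod N (2 ^ (j + 1))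
  -- N - 3*2^j = 2^(j+1) * (N / 2^(j+1) - 1) + (N % 2^(j+1) - 2^j)
  have hq1 : 1 ≤ N / 2 ^ (j + 1) := by
    rcases Nat.eq_zero_or_pos (N / 2 ^ (j + 1)) with h0 | h0
    · rw [h0] at hd; omega
    · omega
  have hdd : 2 ^ (j+1) * (N / 2 ^ (j+1)) = 2 ^ (j+1) * (N / 2 ^ (j+1) - 1) + 2 ^ (j+1) := by
    have h9 : N / 2 ^ (j+1) = (N / 2 ^ (j+1) - 1) + 1 := by omega
    conv_lhs => rw [h9]
    ring
  have key : N - 3 * 2 ^ j = 2 ^ (j+1) * (N / 2 ^ (j+1) - 1) + (N % 2 ^ (j+1) - 2 ^ j) := by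
    omega
  intro hmem
  have := mem_B_iff_mod.1 hmem
  rw [key, Nat.mul_add_mod] at this
  rw [Nat.mod_eq_of_lt (by omega)] at this
  omega

lemma B_nonempty {c : ℕ} (hc : 1 ≤ c) : (B c).Nonempty := by
  by_contra h
  rw [Finset.not_nonempty_iff_eq_empty] at h
  have := B_sum c
  rw [h] at this
  simp at this
  omega

def eQ (Q : n.Partition) : ℕ := (Q.parts.toFinset.filter (fun p => Even p)).sup id
def kQ (Q : n.Partition) : ℕ := nu (eQ Q)
def mQ (Q : n.Partition) : ℕ := om (eQ Q)
def NQ (Q : n.Partition) : ℕ := Nv Q (mQ Q)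
noncomputable def jQ (Q : n.Partition) : ℕ :=
  Nat.findGreatest (fun i => i ∈ B (NQ Q)) (kQ Q - 1)

lemma predA_spec {Q : n.Partition} (hQ : predA Q) :
    1 ≤ kQ Q ∧ Odd (mQ Q) ∧
      Q.parts.toFinset.filter (fun p => Even p) = {2 ^ kQ Q * mQ Q} ∧
      Odd (Q.parts.count (2 ^ kQ Q * mQ Q)) ∧
      1 ≤ Q.parts.count (mQ Q) ∧ Q.parts.count (mQ Q) ≤ 2 ^ kQ Q - 1 := by
  rcases hQ with ⟨k, m, hk, hm, hfil, hodd, hr1, hr2⟩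
  have he : eQ Q = 2 ^ k * m := by
    rw [eQ, hfil, Finset.sup_singleton]; rfl
  have hkQ : kQ Q = k := by rw [kQ, he, nu_two_pow_mul hm]
  have hmQ : mQ Q = m := by rw [mQ, he, om_two_pow_mul hm]
  rw [hkQ, hmQ]
  exact ⟨hk, hm, hfil, hodd, hr1, hr2⟩

lemma e_mem_parts {Q : n.Partition} (hQ : predA Q) : 2 ^ kQ Q * mQ Q ∈ Q.parts := by
  have h := (predA_spec hQ).2.2.1
  have : 2 ^ kQ Q * mQ Q ∈ Q.parts.toFinset.filter (fun p => Even p) := by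
    rw [h]; exact Finset.mem_singleton_self _
  exact Multiset.mem_toFinset.1 (Finset.mem_filter.1 this).1

lemma eQ_even (Q : n.Partition) (hQ : predA Q) : Even (2 ^ kQ Q * mQ Q) := by
  have h := (predA_spec hQ).1
  exact ((Nat.even_pow' (by omega)).2 even_two).mul_right _

lemma predA_part_odd {Q : n.Partition} (hQ : predA Q) {p : ℕ} (hp : p ∈ Q.parts)
    (hpe : p ≠ 2 ^ kQ Q * mQ Q) : Odd p := by
  by_contra h
  have hpeven : Even p := Nat.not_odd_iff_even.1 h
  have : p ∈ Q.parts.toFinset.filter (fun p => Even p) :=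
    Finset.mem_filter.2 ⟨Multiset.mem_toFinset.2 hp, hpeven⟩
  rw [(predA_spec hQ).2.2.1] at this
  exact hpe (Finset.mem_singleton.1 this)

lemma m_ne_eQ {Q : n.Partition} (hQ : predA Q) : mQ Q ≠ 2 ^ kQ Q * mQ Q := by
  intro h
  exact (Nat.not_odd_iff_even.2 (h ▸ eQ_even Q hQ)) (predA_spec hQ).2.1

lemma Nv_odd_self {Q : n.Partition} (hQ : predA Q) {v : ℕ} (hv : Odd v)
    (hvm : v ≠ mQ Q) : Nv Q v = Q.parts.count v := by
  unfold Nv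
  have hfe : Q.parts.filter (fun p => om p = v) = Q.parts.filter (fun p => p = v) := by
    apply Multiset.filter_congr
    intro p hp
    constructor
    · intro hop
      by_cases hpe : p = 2 ^ kQ Q * mQ Q
      · exfalso
        apply hvm
        rw [← hop, hpe, om_two_pow_mul (predA_spec hQ).2.1]
      · rw [← hop, om_odd_self (predA_part_odd hQ hp hpe)]
    · rintro rfl
      exact om_odd_self hv
  rw [hfe, Multiset.filter_eq']
  rw [Multiset.map_replicate, Multiset.sum_replicate, smul_eq_mul, nu_odd_self hv]
  simp

lemma mQ_class_finset {Q : n.Partition} (hQ : predA Q) :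
    Q.parts.toFinset.filter (fun p => om p = mQ Q) = {mQ Q, 2 ^ kQ Q * mQ Q} := by
  apply Finset.ext
  intro p
  simp only [Finset.mem_filter, Multiset.mem_toFinset, Finset.mem_insert, Finset.mem_singleton]
  constructor
  · rintro ⟨hp, hop⟩
    by_cases hpe : p = 2 ^ kQ Q * mQ Q
    · right; exact hpe
    · left
      rw [← hop, om_odd_self (predA_part_odd hQ hp hpe)]
  · rintro (rfl | rfl)
    · refine ⟨?_, om_odd_self (predA_spec hQ).2.1⟩
      rw [← Multiset.count_pos]
      have := (predA_spec hQ).2.2.2.2.1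
      omega
    · exact ⟨e_mem_parts hQ, om_two_pow_mul (predA_spec hQ).2.1⟩

lemma NQ_eq {Q : n.Partition} (hQ : predA Q) :
    NQ Q = Q.parts.count (mQ Q) + 2 ^ kQ Q * Q.parts.count (2 ^ kQ Q * mQ Q) := by
  rw [NQ, Nv_eq_finset_sum, mQ_class_finset hQ]
  rw [Finset.sum_insert (by simpa using m_ne_eQ hQ), Finset.sum_singleton]
  rw [nu_odd_self (predA_spec hQ).2.1, nu_two_pow_mul (predA_spec hQ).2.1]
  ring

lemma NQ_mod {Q : n.Partition} (hQ : predA Q) :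
    NQ Q % 2 ^ kQ Q = Q.parts.count (mQ Q) := by
  rw [NQ_eq hQ, Nat.add_mul_mod_self_left, Nat.mod_eq_of_lt]
  have h1 := (predA_spec hQ).2.2.2.2.2
  have h2 : (0:ℕ) < 2 ^ kQ Q := by positivity
  omega

lemma NQ_div {Q : n.Partition} (hQ : predA Q) :
    NQ Q / 2 ^ kQ Q = Q.parts.count (2 ^ kQ Q * mQ Q) := by
  rw [NQ_eq hQ, Nat.add_mul_div_left _ _ (show (0:ℕ) < 2 ^ kQ Q by positivity),
    Nat.div_eq_of_lt, zero_add]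
  have h1 := (predA_spec hQ).2.2.2.2.2
  have h2 : (0:ℕ) < 2 ^ kQ Q := by positivity
  omega

lemma good_Q {Q : n.Partition} (hQ : predA Q) : Good (NQ Q) (jQ Q) (kQ Q) := by
  have hk : kQ Q ∈ B (NQ Q) := by
    rw [mem_B_iff_odd, NQ_div hQ]
    exact (predA_spec hQ).2.2.2.1
  have hr : 1 ≤ NQ Q % 2 ^ kQ Q := by
    rw [NQ_mod hQ]; exact (predA_spec hQ).2.2.2.2.1
  exact good_of_mem_upper hk hr


lemma count_replicate' (q c x : ℕ) : (Multiset.replicate c x).count q = if q = x then c else 0 := by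
  rw [Multiset.count_replicate]
  by_cases h : q = x
  · simp [h]
  · rw [if_neg (fun hh => h hh.symm), if_neg h]

lemma count_binv {v : ℕ} (hv : Odd v) (c q : ℕ) :
    ((B c).val.map (fun i => 2 ^ i * v)).count q
      = if om q = v ∧ nu q ∈ B c then 1 else 0 := by
  rw [Multiset.count_map]
  by_cases h : om q = v ∧ nu q ∈ B c
  · rw [if_pos h]
    have hfe : (B c).filter (fun i => q = 2 ^ i * v) = {nu q} := by
      apply Finset.ext
      intro i
      simp only [Finset.mem_filter, Finset.mem_singleton]
      constructor
      · rintro ⟨hiB, hqi⟩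
        rw [hqi, nu_two_pow_mul hv]
      · rintro rfl
        refine ⟨h.2, ?_⟩
        conv_lhs => rw [← nu_om q]
        rw [h.1]
    have : Multiset.filter (fun a => q = 2 ^ a * v) (B c).val
        = ((B c).filter (fun i => q = 2 ^ i * v)).val := (Finset.filter_val _ _).symm
    rw [this, hfe]
    rfl
  · rw [if_neg h]
    have hfe : (B c).filter (fun i => q = 2 ^ i * v) = ∅ := by
      rw [Finset.filter_eq_empty_iff]
      intro i hi hqi
      exact h ⟨by rw [hqi, om_two_pow_mul hv], by rw [hqi, nu_two_pow_mul hv]; exact hi⟩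
    have : Multiset.filter (fun a => q = 2 ^ a * v) (B c).val
        = ((B c).filter (fun i => q = 2 ^ i * v)).val := (Finset.filter_val _ _).symm
    rw [this, hfe]
    rfl

lemma binv_sum (c v : ℕ) : ((B c).val.map (fun i => 2 ^ i * v)).sum = c * v := by
  show ∑ i ∈ B c, 2 ^ i * v = c * v
  rw [← Finset.sum_mul, B_sum]

/-- the support of the odd classes other than `mQ` -/
def suppQ (Q : n.Partition) : Finset ℕ :=
  (Q.parts.toFinset.erase (2 ^ kQ Q * mQ Q)).erase (mQ Q)

lemma suppQ_spec {Q : n.Partition} (hQ : predA Q) {v : ℕ} (hv : v ∈ suppQ Q) :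
    Odd v ∧ v ≠ mQ Q ∧ v ∈ Q.parts := by
  rcases Finset.mem_erase.1 hv with ⟨hvm, hv2⟩
  rcases Finset.mem_erase.1 hv2 with ⟨hve, hvT⟩
  have hvp := Multiset.mem_toFinset.1 hvT
  exact ⟨predA_part_odd hQ hvp hve, hvm, hvp⟩

noncomputable def psiParts (Q : n.Partition) : Multiset ℕ :=
  Multiset.replicate 3 (2 ^ jQ Q * mQ Q)
    + (B (NQ Q - 3 * 2 ^ jQ Q)).val.map (fun i => 2 ^ i * mQ Q)
    + ∑ v ∈ suppQ Q, (B (Q.parts.count v)).val.map (fun i => 2 ^ i * v)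

lemma count_psi {Q : n.Partition} (hQ : predA Q) (q : ℕ) :
    (psiParts Q).count q
      = (if q = 2 ^ jQ Q * mQ Q then 3 else 0)
        + (if om q = mQ Q ∧ nu q ∈ B (NQ Q - 3 * 2 ^ jQ Q) then 1 else 0)
        + (if om q ∈ suppQ Q ∧ nu q ∈ B (Q.parts.count (om q)) then 1 else 0) := by
  unfold psiParts
  rw [Multiset.count_add, Multiset.count_add, count_replicate',
    count_binv (predA_spec hQ).2.1]
  congr 1
  rw [Multiset.count_sum']
  have hco : ∀ v ∈ suppQ Q, ((B (Q.parts.count v)).val.map (fun i => 2 ^ i * v)).count q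
      = if om q = v ∧ nu q ∈ B (Q.parts.count v) then 1 else 0 := by
    intro v hv
    exact count_binv (suppQ_spec hQ hv).1 _ _
  rw [Finset.sum_congr rfl hco]
  simp only [ite_and]
  rw [Finset.sum_ite_eq (suppQ Q) (om q)
    (fun v => if nu q ∈ B (Q.parts.count v) then 1 else 0)]

lemma psiParts_sum {Q : n.Partition} (hQ : predA Q) : (psiParts Q).sum = n := by
  unfold psiParts
  rw [Multiset.sum_add, Multiset.sum_add, Multiset.sum_replicate, binv_sum]
  have hsum3 : (∑ v ∈ suppQ Q, (B (Q.parts.count v)).val.map (fun i => 2 ^ i * v)).sum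
      = ∑ v ∈ suppQ Q, Q.parts.count v * v := by
    induction (suppQ Q) using Finset.induction_on with
    | empty => simp
    | insert a s hx ih =>
      rw [Finset.sum_insert hx, Finset.sum_insert hx, Multiset.sum_add, binv_sum, ih]
  rw [hsum3]
  have hS := good_three_le (good_Q hQ)
  have hmm : 3 • (2 ^ jQ Q * mQ Q) + (NQ Q - 3 * 2 ^ jQ Q) * mQ Q = NQ Q * mQ Q := by
    rw [smul_eq_mul, show 3 * (2 ^ jQ Q * mQ Q) = (3 * 2 ^ jQ Q) * mQ Q by ring,
      ← Nat.add_mul]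
    congr 1
    omega
  rw [hmm]
  have h2 : NQ Q * mQ Q = Q.parts.count (mQ Q) * mQ Q
      + Q.parts.count (2 ^ kQ Q * mQ Q) * (2 ^ kQ Q * mQ Q) := by
    rw [NQ_eq hQ]; ring
  rw [h2]
  -- compare with total sum of parts
  have htot : Q.parts.sum = ∑ v ∈ Q.parts.toFinset, Q.parts.count v * v := by
    conv_lhs => rw [← Multiset.map_id Q.parts]
    rw [Finset.sum_multiset_map_count]
    simp
  have hemem : 2 ^ kQ Q * mQ Q ∈ Q.parts.toFinset :=
    Multiset.mem_toFinset.2 (e_mem_parts hQ)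
  have hmmem : mQ Q ∈ Q.parts.toFinset.erase (2 ^ kQ Q * mQ Q) := by
    refine Finset.mem_erase.2 ⟨m_ne_eQ hQ, Multiset.mem_toFinset.2 ?_⟩
    rw [← Multiset.count_pos]
    have := (predA_spec hQ).2.2.2.2.1
    omega
  rw [← Finset.add_sum_erase _ _ hemem, ← Finset.add_sum_erase _ _ hmmem] at htot
  have hps := Q.parts_sum
  rw [htot] at hps
  unfold suppQ
  omega

lemma psiParts_pos {Q : n.Partition} (hQ : predA Q) {x : ℕ} (hx : x ∈ psiParts Q) :
    0 < x := by
  unfold psiParts at hx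
  have hm0 : 0 < mQ Q := by
    have := (predA_spec hQ).2.1
    rcases this with ⟨t, ht⟩
    omega
  rcases Multiset.mem_add.1 hx with hx | hx
  · rcases Multiset.mem_add.1 hx with hx | hx
    · rw [Multiset.eq_of_mem_replicate hx]
      positivity
    · rcases Multiset.mem_map.1 hx with ⟨i, hi, rfl⟩
      positivity
  · rcases Multiset.mem_sum.1 hx with ⟨v, hv, hxv⟩
    rcases Multiset.mem_map.1 hxv with ⟨i, hi, rfl⟩
    have := (suppQ_spec hQ hv).2.2
    have hv0 := Q.parts_pos this
    positivity

noncomputable def Psi (Q : n.Partition) : n.Partition :=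
  if h : predA Q then ⟨psiParts Q, fun hx => psiParts_pos h hx, psiParts_sum h⟩ else Q

lemma Psi_parts {Q : n.Partition} (hQ : predA Q) : (Psi Q).parts = psiParts Q := by
  rw [Psi, dif_pos hQ]

lemma om_aQ (Q : n.Partition) (hQ : predA Q) : om (2 ^ jQ Q * mQ Q) = mQ Q :=
  om_two_pow_mul (predA_spec hQ).2.1

lemma nu_aQ (Q : n.Partition) (hQ : predA Q) : nu (2 ^ jQ Q * mQ Q) = jQ Q :=
  nu_two_pow_mul (predA_spec hQ).2.1

lemma count_psi_triple {Q : n.Partition} (hQ : predA Q) :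
    (psiParts Q).count (2 ^ jQ Q * mQ Q) = 3 := by
  rw [count_psi hQ, if_pos rfl, nu_aQ Q hQ, om_aQ Q hQ]
  rw [if_neg, if_neg]
  · intro hc
    exact Finset.notMem_erase (mQ Q) _ hc.1
  · intro hc
    exact not_mem_B_sub (good_Q hQ) hc.2

lemma predC_Psi {Q : n.Partition} (hQ : predA Q) : predC (Psi Q) := by
  refine ⟨2 ^ jQ Q * mQ Q, ?_, ?_, ?_⟩
  · rw [Multiset.mem_toFinset, ← Multiset.count_pos, Psi_parts hQ, count_psi_triple hQ]
    omega
  · rw [Psi_parts hQ, count_psi_triple hQ]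
  · intro q hq hqa
    rw [Psi_parts hQ] at hq ⊢
    have hq1 : 1 ≤ (psiParts Q).count q :=
      Multiset.count_pos.2 (Multiset.mem_toFinset.1 hq)
    rw [count_psi hQ] at hq1 ⊢
    rw [if_neg hqa] at hq1 ⊢
    by_cases h2 : om q = mQ Q ∧ nu q ∈ B (NQ Q - 3 * 2 ^ jQ Q)
    · rw [if_pos h2] at hq1 ⊢
      rw [if_neg]
      intro h3
      exact (suppQ_spec hQ h3.1).2.1 h2.1
    · rw [if_neg h2] at hq1 ⊢
      by_cases h3 : om q ∈ suppQ Q ∧ nu q ∈ B (Q.parts.count (om q))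
      · rw [if_pos h3]
      · rw [if_neg h3] at hq1
        omega


/-! ### Injectivity of Ψ and the main theorem -/

lemma aP_unique {P : n.Partition} (hP : predC P) {x : ℕ} (hx : x ∈ P.parts)
    (h3 : P.parts.count x = 3) : x = aP P := by
  by_contra h
  have := (aP_spec hP).2.2 x (Multiset.mem_toFinset.2 hx) h
  omega

lemma count_eq_of_iff {c1 c2 : ℕ}
    (h : ∀ i, (1 ≤ c1 ∧ i ∈ B c1) ↔ (1 ≤ c2 ∧ i ∈ B c2)) : c1 = c2 := by
  rcases Nat.eq_zero_or_pos c1 with h0 | h0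
  · rcases Nat.eq_zero_or_pos c2 with h0' | h0'
    · omega
    · rcases B_nonempty h0' with ⟨i0, hi0⟩
      have := (h i0).2 ⟨h0', hi0⟩
      omega
  · rcases B_nonempty h0 with ⟨i0, hi0⟩
    have hc2 := ((h i0).1 ⟨h0, hi0⟩).1
    have hBeq : B c1 = B c2 := by
      apply Finset.ext
      intro i
      constructor
      · intro hi
        exact ((h i).1 ⟨h0, hi⟩).2
      · intro hi
        exact ((h i).2 ⟨hc2, hi⟩).2
    have := B_sum c1
    rw [hBeq, B_sum] at this
    omega

lemma mem_suppQ_iff {Q : n.Partition} (hQ : predA Q) {v : ℕ} (hv : Odd v)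
    (hvm : v ≠ mQ Q) : v ∈ suppQ Q ↔ 1 ≤ Q.parts.count v := by
  unfold suppQ
  rw [Finset.mem_erase, Finset.mem_erase, Multiset.mem_toFinset]
  constructor
  · rintro ⟨-, -, hmem⟩
    exact Multiset.count_pos.2 hmem
  · intro hc
    refine ⟨hvm, ?_, Multiset.count_pos.1 hc⟩
    intro hve
    exact (Nat.not_odd_iff_even.2 (hve ▸ eQ_even Q hQ)) hv

lemma Psi_inj {Q1 Q2 : n.Partition} (h1 : predA Q1) (h2 : predA Q2)
    (he : Psi Q1 = Psi Q2) : Q1 = Q2 := by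
  have hm1 := (predA_spec h1).2.1
  have hm2 := (predA_spec h2).2.1
  -- the triple parts agree
  have htr : 2 ^ jQ Q1 * mQ Q1 = 2 ^ jQ Q2 * mQ Q2 := by
    have e1 : 2 ^ jQ Q1 * mQ Q1 = aP (Psi Q1) := by
      apply aP_unique (predC_Psi h1)
      · rw [Psi_parts h1, ← Multiset.count_pos, count_psi_triple h1]
        omega
      · rw [Psi_parts h1, count_psi_triple h1]
    have e2 : 2 ^ jQ Q2 * mQ Q2 = aP (Psi Q2) := by
      apply aP_unique (predC_Psi h2)
      · rw [Psi_parts h2, ← Multiset.count_pos, count_psi_triple h2]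
        omega
      · rw [Psi_parts h2, count_psi_triple h2]
    rw [e1, e2, he]
  obtain ⟨hj, hm⟩ := two_pow_mul_inj hm1 hm2 htr
  -- counts of Psi agree
  have hcnt : ∀ x, (psiParts Q1).count x = (psiParts Q2).count x := by
    intro x
    rw [← Psi_parts h1, ← Psi_parts h2, he]
  -- binary digit sets of the reduced class agree
  have hB : B (NQ Q1 - 3 * 2 ^ jQ Q1) = B (NQ Q2 - 3 * 2 ^ jQ Q2) := by
    apply Finset.ext
    intro i
    by_cases hij : i = jQ Q1
    · subst hij
      constructor
      · intro hc; exact absurd hc (not_mem_B_sub (good_Q h1))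
      · intro hc; rw [hj] at hc; exact absurd hc (not_mem_B_sub (good_Q h2))
    · have hq := hcnt (2 ^ i * mQ Q1)
      rw [count_psi h1, count_psi h2] at hq
      rw [nu_two_pow_mul hm1, om_two_pow_mul hm1] at hq
      have hne1 : ¬ (2 ^ i * mQ Q1 = 2 ^ jQ Q1 * mQ Q1) := by
        intro hcc
        exact hij (two_pow_mul_inj hm1 hm1 hcc).1
      have hne2 : ¬ (2 ^ i * mQ Q1 = 2 ^ jQ Q2 * mQ Q2) := by
        intro hcc
        exact hij ((two_pow_mul_inj hm1 hm2 hcc).1.trans hj.symm)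
      have hns1 : ¬ (mQ Q1 ∈ suppQ Q1 ∧ i ∈ B (Q1.parts.count (mQ Q1))) := by
        rintro ⟨hs, -⟩
        exact (suppQ_spec h1 hs).2.1 rfl
      have hns2 : ¬ (mQ Q1 ∈ suppQ Q2 ∧ i ∈ B (Q2.parts.count (mQ Q1))) := by
        rintro ⟨hs, -⟩
        exact (suppQ_spec h2 hs).2.1 hm
      rw [if_neg hne1, if_neg hne2, if_neg hns1, if_neg hns2] at hq
      have r1 : (if mQ Q1 = mQ Q1 ∧ i ∈ B (NQ Q1 - 3 * 2 ^ jQ Q1) then 1 else 0)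
          = (if i ∈ B (NQ Q1 - 3 * 2 ^ jQ Q1) then (1:ℕ) else 0) := by simp
      have r2 : (if mQ Q1 = mQ Q2 ∧ i ∈ B (NQ Q2 - 3 * 2 ^ jQ Q2) then 1 else 0)
          = (if i ∈ B (NQ Q2 - 3 * 2 ^ jQ Q2) then (1:ℕ) else 0) := by simp [hm]
      rw [r1, r2] at hq
      constructor
      · intro hc
        rw [if_pos hc] at hq
        by_contra hc2
        rw [if_neg hc2] at hq
        omega
      · intro hc
        rw [if_pos hc] at hq
        by_contra hc2
        rw [if_neg hc2] at hq
        omega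
  have hN' : NQ Q1 - 3 * 2 ^ jQ Q1 = NQ Q2 - 3 * 2 ^ jQ Q2 := by
    have t1 := B_sum (NQ Q1 - 3 * 2 ^ jQ Q1)
    rw [hB, B_sum] at t1
    omega
  have h31 := good_three_le (good_Q h1)
  have h32 := good_three_le (good_Q h2)
  have hN : NQ Q1 = NQ Q2 := by
    rw [hj] at hN' h31
    omega
  have hk : kQ Q1 = kQ Q2 := by
    have g1 := good_Q h1
    rw [hN, hj] at g1
    exact good_unique_up g1 (good_Q h2)
  -- now compare all counts of Q1 and Q2
  apply Nat.Partition.ext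
  rw [Multiset.ext]
  intro q
  by_cases hq0 : q = 0
  · subst hq0
    rw [Multiset.count_eq_zero_of_notMem, Multiset.count_eq_zero_of_notMem]
    · intro hc; exact absurd (Q2.parts_pos hc) (by omega)
    · intro hc; exact absurd (Q1.parts_pos hc) (by omega)
  by_cases hqodd : Odd q
  · by_cases hqm : q = mQ Q1
    · rw [hqm, ← NQ_mod h1, hm, ← NQ_mod h2, hN, hk]
    · apply count_eq_of_iff
      intro i
      have hq' := hcnt (2 ^ i * q)
      rw [count_psi h1, count_psi h2] at hq'
      rw [nu_two_pow_mul hqodd, om_two_pow_mul hqodd] at hq'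
      have hne1 : ¬ (2 ^ i * q = 2 ^ jQ Q1 * mQ Q1) := by
        intro hcc
        exact hqm (two_pow_mul_inj hqodd hm1 hcc).2
      have hne2 : ¬ (2 ^ i * q = 2 ^ jQ Q2 * mQ Q2) := by
        intro hcc
        exact hqm ((two_pow_mul_inj hqodd hm2 hcc).2.trans hm.symm)
      have hnm2 : q ≠ mQ Q2 := fun hcc => hqm (hcc.trans hm.symm)
      have hc1 : ¬ (q = mQ Q1 ∧ i ∈ B (NQ Q1 - 3 * 2 ^ jQ Q1)) := fun hcc => hqm hcc.1
      have hc2 : ¬ (q = mQ Q2 ∧ i ∈ B (NQ Q2 - 3 * 2 ^ jQ Q2)) := fun hcc => hnm2 hcc.1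
      rw [if_neg hne1, if_neg hne2, if_neg hc1, if_neg hc2] at hq'
      have r1 : (if q ∈ suppQ Q1 ∧ i ∈ B (Q1.parts.count q) then 1 else 0)
          = (if 1 ≤ Q1.parts.count q ∧ i ∈ B (Q1.parts.count q) then (1:ℕ) else 0) :=
        if_congr (and_congr_left' (mem_suppQ_iff h1 hqodd hqm)) rfl rfl
      have r2 : (if q ∈ suppQ Q2 ∧ i ∈ B (Q2.parts.count q) then 1 else 0)
          = (if 1 ≤ Q2.parts.count q ∧ i ∈ B (Q2.parts.count q) then (1:ℕ) else 0) :=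
        if_congr (and_congr_left' (mem_suppQ_iff h2 hqodd hnm2)) rfl rfl
      rw [r1, r2] at hq'
      constructor
      · intro hc
        rw [if_pos hc] at hq'
        by_contra hc2
        rw [if_neg hc2] at hq'
        omega
      · intro hc
        rw [if_pos hc] at hq'
        by_contra hc2
        rw [if_neg hc2] at hq'
        omega
  · have heven : Even q := Nat.not_odd_iff_even.1 hqodd
    have hee : (2:ℕ) ^ kQ Q1 * mQ Q1 = 2 ^ kQ Q2 * mQ Q2 := by rw [hk, hm]
    by_cases hqe : q = 2 ^ kQ Q1 * mQ Q1
    · rw [hqe, ← NQ_div h1, hee, ← NQ_div h2, hN, hk]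
    · have hnm1 : q ∉ Q1.parts := by
        intro hmem
        apply hqe
        apply Finset.mem_singleton.1
        rw [← (predA_spec h1).2.2.1]
        exact Finset.mem_filter.2 ⟨Multiset.mem_toFinset.2 hmem, heven⟩
      have hnm2 : q ∉ Q2.parts := by
        intro hmem
        apply hqe
        rw [hee]
        apply Finset.mem_singleton.1
        rw [← (predA_spec h2).2.2.1]
        exact Finset.mem_filter.2 ⟨Multiset.mem_toFinset.2 hmem, heven⟩
      rw [Multiset.count_eq_zero_of_notMem hnm1, Multiset.count_eq_zero_of_notMem hnm2]

end C1A1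

open C1A1

theorem c1_eq_a1 (n : ℕ) (hn : 0 < n) :
    (Finset.univ.filter (fun P : n.Partition =>
        ∃ p ∈ P.parts.toFinset, P.parts.count p = 3 ∧
          ∀ q ∈ P.parts.toFinset, q ≠ p → P.parts.count q = 1)).card =
      (Finset.univ.filter (fun P : n.Partition =>
        ∃ k m : ℕ, 1 ≤ k ∧ Odd m ∧
          P.parts.toFinset.filter (fun p => Even p) = {2 ^ k * m} ∧
          Odd (P.parts.count (2 ^ k * m)) ∧
          1 ≤ P.parts.count m ∧ P.parts.count m ≤ 2 ^ k - 1)).card := by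
  apply le_antisymm
  · apply Finset.card_le_card_of_injOn Phi
    · intro P hP
      simp only [Finset.coe_filter, Finset.mem_filter, Finset.mem_univ, true_and, Set.mem_setOf_eq] at hP ⊢
      exact predA_Phi hP
    · intro P1 hP1 P2 hP2 heq
      simp only [Finset.coe_filter, Finset.mem_univ, true_and, Set.mem_setOf_eq] at hP1 hP2
      exact Phi_inj hP1 hP2 heq
  · apply Finset.card_le_card_of_injOn Psi
    · intro Q hQ
      simp only [Finset.coe_filter, Finset.mem_filter, Finset.mem_univ, true_and, Set.mem_setOf_eq] at hQ ⊢
      exact predC_Psi hQ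
    · intro Q1 hQ1 Q2 hQ2 heq
      simp only [Finset.coe_filter, Finset.mem_univ, true_and, Set.mem_setOf_eq] at hQ1 hQ2
      exact Psi_inj hQ1 hQ2 heq
end
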